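/- arXiv:1110.0262 — 4 statements merged into one kernel-verified Lean document; each statement's English description precedes it below -/
import Mathlib

section
/- Let (X_n) be i.i.d. integer-valued random variables with E[X_1] < 0 and geometric right tail P(X_1 ≥ x) = ξ·r^x for integers x ≥ 0 (0 < ξ < 1, 0 < r < 1), and let S_n = X_1 + ⋯ + X_n, S_0 = 0. Let p = P(sup_n S_n > 0). Then p < 1, and for every integer x ≥ 0: P(sup_{n≥0} S_n > x) = p·(1 - (1-p)(1-r))^x. -/
open MeasureTheory ProbabilityTheory Filter Topology

section KPHelpers

variable {Ω : Type*} [MeasurableSpace Ω] {μ : Measure Ω} [IsProbabilityMeasure μ]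
  {X : ℕ → Ω → ℤ}

/-- partial sums of a finite tuple, extended by zero -/
def psumE {n : ℕ} (v : Fin n → ℤ) (i : ℕ) : ℤ :=
  ∑ j ∈ Finset.range i, if h : j < n then v ⟨j, h⟩ else 0

lemma measurable_psumE {n i : ℕ} : Measurable fun v : Fin n → ℤ => psumE v i := by
  unfold psumE
  exact Finset.measurable_sum _ fun j _ => by
    split_ifs with h
    · exact measurable_pi_apply _
    · exact measurable_const

lemma measurable_tuple (hmeas : ∀ n, Measurable (X n)) (n K : ℕ) :
    Measurable fun ω (i : Fin K) => X (n + i) ω :=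
  measurable_pi_lambda _ fun i => hmeas _

/-- law of a shifted finite tuple of the iid sequence -/
lemma law_tuple (hmeas : ∀ n, Measurable (X n))
    (hindep : iIndepFun X μ)
    (hident : ∀ n, Measure.map (X n) μ = Measure.map (X 0) μ) (n K : ℕ) :
    Measure.map (fun ω (i : Fin K) => X (n + i) ω) μ
      = Measure.pi (fun _ : Fin K => Measure.map (X 0) μ) := by
  have hprob : IsProbabilityMeasure (Measure.map (X 0) μ) :=
    Measure.isProbabilityMeasure_map (hmeas 0).aemeasurable
  refine (Measure.pi_eq fun s hs => ?_).symm
  classical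
  set s' : ℕ → Set ℤ := fun j => if h : n ≤ j ∧ j - n < K then s ⟨j - n, h.2⟩ else Set.univ
    with hs'
  have hs'n : ∀ i : Fin K, s' (n + i) = s i := by
    intro i
    have h1 : n ≤ n + i ∧ (n + i) - n < K := ⟨Nat.le_add_right _ _, by simp [i.isLt]⟩
    rw [hs']
    simp only [dif_pos h1]
    congr 1
    ext
    simp
  have hpre : (fun ω (i : Fin K) => X (n + i) ω) ⁻¹' Set.pi Set.univ s
      = ⋂ j ∈ Finset.Ico n (n + K), X j ⁻¹' s' j := by
    ext ω
    simp only [Set.mem_preimage, Set.mem_pi, Set.mem_univ, forall_true_left, Set.mem_iInter,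
      Finset.mem_Ico]
    constructor
    · rintro h j ⟨hj1, hj2⟩
      have h2 : j - n < K := by omega
      have h3 : n + (⟨j - n, h2⟩ : Fin K) = j := by simp; omega
      have := h ⟨j - n, h2⟩
      rw [← hs'n ⟨j - n, h2⟩, h3] at this
      exact this
    · intro h i
      have := h (n + i) ⟨Nat.le_add_right _ _, by simp [i.isLt]⟩
      rwa [hs'n i] at this
  have hmeass' : ∀ j, MeasurableSet (s' j) := by
    intro j
    simp only [hs']
    split_ifs with h
    · exact hs _
    · exact MeasurableSet.univ
  have key := hindep.measure_inter_preimage_eq_mul (S := Finset.Ico n (n + K))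
    (sets := s') (fun i _ => hmeass' i)
  rw [Measure.map_apply (measurable_tuple hmeas n K) (MeasurableSet.univ_pi hs), hpre, key]
  have hmarg : ∀ j, μ (X j ⁻¹' s' j) = Measure.map (X 0) μ (s' j) := by
    intro j
    rw [← Measure.map_apply (hmeas j) (hmeass' j), hident j]
  calc ∏ j ∈ Finset.Ico n (n + K), μ (X j ⁻¹' s' j)
      = ∏ j ∈ Finset.Ico n (n + K), Measure.map (X 0) μ (s' j) :=
        Finset.prod_congr rfl fun j _ => hmarg j
    _ = ∏ i ∈ Finset.range K, Measure.map (X 0) μ (s' (n + i)) := by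
        rw [Finset.prod_Ico_eq_prod_range, Nat.add_sub_cancel_left]
    _ = ∏ i : Fin K, Measure.map (X 0) μ (s' (n + i)) :=
        (Fin.prod_univ_eq_prod_range (fun i => Measure.map (X 0) μ (s' (n + i))) K).symm
    _ = ∏ i : Fin K, Measure.map (X 0) μ (s i) :=
        Finset.prod_congr rfl fun i _ => by rw [hs'n i]

/-- the first `n` variables are independent of the next `K` -/
lemma indep_tuple (hmeas : ∀ n, Measurable (X n))
    (hindep : iIndepFun X μ) (n K : ℕ) :
    IndepFun (fun ω (i : Fin n) => X i ω) (fun ω (i : Fin K) => X (n + i) ω) μ := by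
  classical
  have h := hindep.indepFun_finset (Finset.range n) (Finset.Ico n (n + K))
    (by simp [Finset.disjoint_left]; omega) hmeas
  have hφ : Measurable fun (v : (i : ↥(Finset.range n)) → ℤ) (i : Fin n) =>
      v ⟨i, Finset.mem_range.mpr i.isLt⟩ :=
    measurable_pi_lambda _ fun i => measurable_pi_apply _
  have hψ : Measurable fun (v : (i : ↥(Finset.Ico n (n + K))) → ℤ) (i : Fin K) =>
      v ⟨n + i, by simp [Finset.mem_Ico]⟩ :=
    measurable_pi_lambda _ fun i => measurable_pi_apply _
  exact h.comp hφ hψ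

lemma indep_head_X (hmeas : ∀ n, Measurable (X n))
    (hindep : iIndepFun X μ) (m : ℕ) :
    IndepFun (fun ω (i : Fin m) => X i ω) (X m) μ := by
  have h := (indep_tuple hmeas hindep m 1).comp measurable_id
    (measurable_pi_apply (0 : Fin 1))
  have he : (fun v : Fin 1 → ℤ => v 0) ∘ (fun ω (i : Fin 1) => X (m + i) ω) = X m := by
    funext ω; simp
  rwa [he] at h

lemma overshoot (hmeas : ∀ n, Measurable (X n))
    (hindep : iIndepFun X μ) {ξ r : ℝ} (hr : 0 ≤ r)
    (htail' : ∀ (n : ℕ) (c : ℤ), 0 ≤ c →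
      μ {ω | c ≤ X n ω} = ENNReal.ofReal (ξ * r ^ c.toNat))
    (S : ℕ → Ω → ℤ) (hS : ∀ n ω, S n ω = ∑ i ∈ Finset.range n, X i ω)
    (x : ℤ) (hx : 0 ≤ x) (m k : ℕ) :
    μ ({ω | ∀ i ≤ m, S i ω ≤ x} ∩ {ω | x + 1 + (k : ℤ) ≤ S (m+1) ω})
      = ENNReal.ofReal (r ^ k)
        * μ ({ω | ∀ i ≤ m, S i ω ≤ x} ∩ {ω | x + 1 + ((0:ℕ) : ℤ) ≤ S (m+1) ω}) := by
  classical
  have hSmeas : ∀ n, Measurable (S n) := by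
    intro n
    have : S n = fun ω => ∑ i ∈ Finset.range n, X i ω := funext (hS n)
    rw [this]; exact Finset.measurable_sum _ fun i _ => hmeas i
  have hSsucc : ∀ ω, S (m+1) ω = S m ω + X m ω := by
    intro ω; rw [hS, hS, Finset.sum_range_succ]
  set F : Set Ω := {ω | ∀ i ≤ m, S i ω ≤ x} with hF
  have hFmeas : MeasurableSet F := by
    have : F = ⋂ i, ⋂ (_ : i ≤ m), {ω | S i ω ≤ x} := by ext ω; simp [hF]
    rw [this]
    exact MeasurableSet.iInter fun i => MeasurableSet.iInter fun _ =>
      measurableSet_le (hSmeas i) measurable_const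
  set H : ℕ → ℤ → Set Ω := fun k u =>
    (F ∩ {ω | S m ω = u}) ∩ {ω | x + 1 + (k : ℤ) - u ≤ X m ω} with hH
  have hHmeas : ∀ k u, MeasurableSet (H k u) := fun k u =>
    (hFmeas.inter ((hSmeas m) (measurableSet_singleton u))).inter
      ((hmeas m) measurableSet_Ici)
  have hdecomp : ∀ k : ℕ, F ∩ {ω | x + 1 + (k : ℤ) ≤ S (m+1) ω} = ⋃ u : ℤ, H k u := by
    intro k
    ext ω
    simp only [Set.mem_inter_iff, Set.mem_setOf_eq, Set.mem_iUnion, hH]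
    constructor
    · rintro ⟨hf, hs⟩
      refine ⟨S m ω, ⟨hf, rfl⟩, ?_⟩
      rw [hSsucc] at hs; omega
    · rintro ⟨u, ⟨hf, hu⟩, h2⟩
      refine ⟨hf, ?_⟩
      rw [hSsucc]; omega
  have hdisj : ∀ k : ℕ, Pairwise (Function.onFun Disjoint (H k)) := by
    intro k u v huv
    refine Set.disjoint_left.mpr fun ω h1 h2 => huv ?_
    rw [← h1.1.2, ← h2.1.2]
  have hps : ∀ (ω : Ω) (i : ℕ), i ≤ m → psumE (fun j : Fin m => X j ω) i = S i ω := by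
    intro ω i hi
    rw [hS]
    exact Finset.sum_congr rfl fun j hj =>
      dif_pos (lt_of_lt_of_le (Finset.mem_range.mp hj) hi)
  have hterm : ∀ u : ℤ, μ (H k u) = ENNReal.ofReal (r ^ k) * μ (H 0 u) := by
    intro u
    by_cases hu : u ≤ x
    · set B : Set (Fin m → ℤ) :=
        {v | (∀ i ≤ m, psumE v i ≤ x) ∧ psumE v m = u} with hB
      have hBmeas : MeasurableSet B := by
        have : B = (⋂ i, ⋂ (_ : i ≤ m), {v : Fin m → ℤ | psumE v i ≤ x})
            ∩ {v : Fin m → ℤ | psumE v m = u} := by ext v; simp [hB]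
        rw [this]
        exact (MeasurableSet.iInter fun i => MeasurableSet.iInter fun _ =>
          measurableSet_le measurable_psumE measurable_const).inter
          (measurable_psumE (measurableSet_singleton u))
      have hrep : F ∩ {ω | S m ω = u} = (fun ω (j : Fin m) => X j ω) ⁻¹' B := by
        ext ω
        simp only [Set.mem_inter_iff, Set.mem_setOf_eq, Set.mem_preimage, hF, hB]
        constructor
        · rintro ⟨hf, he⟩
          exact ⟨fun i hi => by rw [hps ω i hi]; exact hf i hi,
            by rw [hps ω m le_rfl]; exact he⟩
        · rintro ⟨hf, he⟩
          exact ⟨fun i hi => by rw [← hps ω i hi]; exact hf i hi,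
            by rw [← hps ω m le_rfl]; exact he⟩
      have hXpre : ∀ c : ℤ, {ω | c ≤ X m ω} = X m ⁻¹' Set.Ici c := fun c => rfl
      have hindepmul := (indep_head_X hmeas hindep m).measure_inter_preimage_eq_mul
      have hfac : ∀ c : ℤ, μ ((F ∩ {ω | S m ω = u}) ∩ {ω | c ≤ X m ω})
          = μ (F ∩ {ω | S m ω = u}) * μ {ω | c ≤ X m ω} := by
        intro c
        rw [hrep, hXpre c]
        exact hindepmul B (Set.Ici c) hBmeas measurableSet_Ici
      have hc1 : (0:ℤ) ≤ x + 1 + (k : ℤ) - u := by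
        have : (0:ℤ) ≤ (k:ℤ) := Int.natCast_nonneg k
        omega
      have hc0 : (0:ℤ) ≤ x + 1 + ((0:ℕ) : ℤ) - u := by simp; omega
      have hexp : (x + 1 + (k : ℤ) - u).toNat = k + (x + 1 + ((0:ℕ) : ℤ) - u).toNat := by
        simp only [Nat.cast_zero]
        omega
      rw [hH]
      simp only
      rw [hfac, hfac, htail' m _ hc1, htail' m _ hc0, hexp, pow_add,
        show ξ * (r ^ k * r ^ (x + 1 + ((0:ℕ) : ℤ) - u).toNat)
          = r ^ k * (ξ * r ^ (x + 1 + ((0:ℕ) : ℤ) - u).toNat) by ring,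
        ENNReal.ofReal_mul (pow_nonneg hr k)]
      ring
    · have hFu : F ∩ {ω | S m ω = u} = ∅ := by
        ext ω
        simp only [Set.mem_inter_iff, Set.mem_setOf_eq, Set.mem_empty_iff_false, iff_false,
          not_and, hF]
        intro hf he
        have := hf m le_rfl
        omega
      have h1 : H k u = ∅ := by rw [hH]; simp only; rw [hFu]; simp
      have h0 : H 0 u = ∅ := by rw [hH]; simp only; rw [hFu]; simp
      rw [h1, h0]; simp
  rw [hdecomp, hdecomp, measure_iUnion (hdisj k) (hHmeas k),
    measure_iUnion (hdisj 0) (hHmeas 0)]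
  rw [ENNReal.tsum_mul_left.symm]
  exact tsum_congr hterm

end KPHelpers

theorem stmt_4 {Ω : Type*} [MeasurableSpace Ω] (μ : Measure Ω) [IsProbabilityMeasure μ]
    (X : ℕ → Ω → ℤ) (hmeas : ∀ n, Measurable (X n))
    (hindep : iIndepFun X μ)
    (hident : ∀ n, Measure.map (X n) μ = Measure.map (X 0) μ)
    (hint : Integrable (fun ω => (X 0 ω : ℝ)) μ)
    (hdrift : ∫ ω, (X 0 ω : ℝ) ∂μ < 0)
    (ξ r : ℝ) (hξ : 0 < ξ) (hξ1 : ξ < 1) (hr : 0 < r) (hr1 : r < 1)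
    (htail : ∀ x : ℕ, (μ {ω | (x : ℤ) ≤ X 0 ω}).toReal = ξ * r ^ x)
    (S : ℕ → Ω → ℤ) (hS : ∀ n ω, S n ω = ∑ i ∈ Finset.range n, X i ω)
    (p : ℝ) (hp : p = (μ {ω | ∃ n, 0 < S n ω}).toReal) :
    p < 1 ∧
    ∀ x : ℕ,
      (μ {ω | ∃ n, (x : ℤ) < S n ω}).toReal = p * (1 - (1 - p) * (1 - r)) ^ x := by
  classical
  have hSmeas : ∀ n, Measurable (S n) := by
    intro n
    have : S n = fun ω => ∑ i ∈ Finset.range n, X i ω := funext (hS n)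
    rw [this]; exact Finset.measurable_sum _ fun i _ => hmeas i
  have hS0 : ∀ ω, S 0 ω = 0 := fun ω => by rw [hS]; simp
  have hSadd : ∀ n t ω, S (n + t) ω = S n ω + ∑ j ∈ Finset.range t, X (n + j) ω := by
    intro n t ω; rw [hS, hS, Finset.sum_range_add]
  -- the tail lemma in ENNReal form for each variable
  have htail' : ∀ (n : ℕ) (c : ℤ), 0 ≤ c →
      μ {ω | c ≤ X n ω} = ENNReal.ofReal (ξ * r ^ c.toNat) := by
    intro n c hc
    have hset : MeasurableSet {z : ℤ | c ≤ z} := measurableSet_le measurable_const measurable_id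
    have h1 : μ {ω | c ≤ X n ω} = μ {ω | c ≤ X 0 ω} := by
      have e1 : {ω | c ≤ X n ω} = X n ⁻¹' {z | c ≤ z} := rfl
      have e2 : {ω | c ≤ X 0 ω} = X 0 ⁻¹' {z | c ≤ z} := rfl
      rw [e1, e2, ← Measure.map_apply (hmeas n) hset, ← Measure.map_apply (hmeas 0) hset,
        hident n]
    have h2 := htail c.toNat
    rw [Int.toNat_of_nonneg hc] at h2
    rw [h1, ← h2, ENNReal.ofReal_toReal (measure_ne_top μ _)]
  -- the main families of sets
  set A : ℕ → Set Ω := fun x => {ω | ∃ n, (x : ℤ) < S n ω} with hA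
  set E : ℕ → ℕ → Set Ω := fun x n => {ω | (x : ℤ) < S n ω ∧ ∀ i < n, S i ω ≤ (x : ℤ)} with hE
  set D : ℕ → Set Ω := fun n => {ω | ∃ m, 0 < ∑ j ∈ Finset.range m, X (n + j) ω} with hD
  set DK : ℕ → ℕ → Set Ω :=
    fun n K => {ω | ∃ m < K, 0 < ∑ j ∈ Finset.range m, X (n + j) ω} with hDK
  have hAmeas : ∀ x, MeasurableSet (A x) := by
    intro x
    have : A x = ⋃ n, {ω | (x : ℤ) < S n ω} := by ext ω; simp [hA]
    rw [this]
    exact MeasurableSet.iUnion fun n => measurableSet_lt measurable_const (hSmeas n)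
  have hEmeas : ∀ x n, MeasurableSet (E x n) := by
    intro x n
    have : E x n = {ω | (x : ℤ) < S n ω} ∩ ⋂ i, ⋂ (_ : i < n), {ω | S i ω ≤ (x : ℤ)} := by
      ext ω; simp [hE]
    rw [this]
    exact (measurableSet_lt measurable_const (hSmeas n)).inter
      (MeasurableSet.iInter fun i => MeasurableSet.iInter fun _ =>
        measurableSet_le (hSmeas i) measurable_const)
  have hDKmeas : ∀ n K, MeasurableSet (DK n K) := by
    intro n K
    have : DK n K = ⋃ m, ⋃ (_ : m < K), {ω | 0 < ∑ j ∈ Finset.range m, X (n + j) ω} := by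
      ext ω; simp [hDK]
    rw [this]
    exact MeasurableSet.iUnion fun m => MeasurableSet.iUnion fun _ =>
      measurableSet_lt measurable_const (Finset.measurable_sum _ fun j _ => hmeas _)
  have hDmeas : ∀ n, MeasurableSet (D n) := by
    intro n
    have : D n = ⋃ m, {ω | 0 < ∑ j ∈ Finset.range m, X (n + j) ω} := by
      ext ω; simp [hD]
    rw [this]
    exact MeasurableSet.iUnion fun m =>
      measurableSet_lt measurable_const (Finset.measurable_sum _ fun j _ => hmeas _)
  set P0 : ENNReal := μ (A 0) with hP0def
  -- structure of A x via first passage decomposition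
  have hEdisj : ∀ x, Pairwise (Function.onFun Disjoint (E x)) := by
    intro x
    have key : ∀ n m, n < m → Disjoint (E x n) (E x m) := by
      intro n m h
      refine Set.disjoint_left.mpr fun ω hn hm => ?_
      exact absurd hn.1 (not_lt.mpr (hm.2 n h))
    intro n m hnm
    rcases hnm.lt_or_gt with h | h
    · exact key _ _ h
    · exact (key _ _ h).symm
  have hEunion : ∀ x, A x = ⋃ n, E x n := by
    intro x
    ext ω
    simp only [hA, hE, Set.mem_setOf_eq, Set.mem_iUnion]
    constructor
    · rintro ⟨n, hn⟩
      have hex : ∃ n, (x : ℤ) < S n ω := ⟨n, hn⟩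
      exact ⟨Nat.find hex, Nat.find_spec hex, fun i hi => not_lt.mp (Nat.find_min hex hi)⟩
    · rintro ⟨n, hn, -⟩
      exact ⟨n, hn⟩
  
  have hmemE : ∀ x n ω, ω ∈ E x n ↔ ((x:ℤ) < S n ω ∧ ∀ i < n, S i ω ≤ (x:ℤ)) :=
    fun _ _ _ => Iff.rfl
  -- DK as preimages of tuples
  set TK : (K : ℕ) → Set (Fin K → ℤ) := fun K => {v | ∃ m < K, 0 < psumE v m} with hTK
  have hTKmeas : ∀ K, MeasurableSet (TK K) := by
    intro K
    have : TK K = ⋃ m, ⋃ (_ : m < K), {v : Fin K → ℤ | 0 < psumE v m} := by ext v; simp [hTK]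
    rw [this]
    exact MeasurableSet.iUnion fun m => MeasurableSet.iUnion fun _ =>
      measurableSet_lt measurable_const measurable_psumE
  have hDKrep : ∀ n K, DK n K = (fun ω (i : Fin K) => X (n + i) ω) ⁻¹' TK K := by
    intro n K
    ext ω
    have hpsh : ∀ m : ℕ, m ≤ K → psumE (fun i : Fin K => X (n + i) ω) m
        = ∑ j ∈ Finset.range m, X (n + j) ω := by
      intro m hm
      exact Finset.sum_congr rfl fun j hj =>
        dif_pos (lt_of_lt_of_le (Finset.mem_range.mp hj) hm)
    simp only [hDK, hTK, Set.mem_setOf_eq, Set.mem_preimage]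
    constructor
    · rintro ⟨m, hm, h⟩
      exact ⟨m, hm, by rw [hpsh m hm.le]; exact h⟩
    · rintro ⟨m, hm, h⟩
      exact ⟨m, hm, by rw [← hpsh m hm.le]; exact h⟩
  have hDKmono : ∀ n, Monotone (DK n) := by
    intro n K L hKL
    rintro ω ⟨m, hm, h⟩
    exact ⟨m, lt_of_lt_of_le hm hKL, h⟩
  have hDun : ∀ n, D n = ⋃ K, DK n K := by
    intro n; ext ω
    simp only [hD, hDK, Set.mem_setOf_eq, Set.mem_iUnion]
    constructor
    · rintro ⟨m, h⟩; exact ⟨m + 1, m, Nat.lt_succ_self m, h⟩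
    · rintro ⟨K, m, _, h⟩; exact ⟨m, h⟩
  have hDKlaw : ∀ n K, μ (DK n K) = μ (DK 0 K) := by
    intro n K
    rw [hDKrep n K, hDKrep 0 K,
      ← Measure.map_apply (measurable_tuple hmeas n K) (hTKmeas K),
      ← Measure.map_apply (measurable_tuple hmeas 0 K) (hTKmeas K),
      law_tuple hmeas hindep hident n K, law_tuple hmeas hindep hident 0 K]
  have hD0A : D 0 = A 0 := by
    ext ω
    simp only [hD, hA, Set.mem_setOf_eq, Nat.cast_zero]
    constructor
    · rintro ⟨m, h⟩
      refine ⟨m, ?_⟩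
      rw [hS]
      simpa using h
    · rintro ⟨m, h⟩
      refine ⟨m, ?_⟩
      rw [hS m ω] at h
      simpa using h
  have hDlaw : ∀ n, μ (D n) = P0 := by
    intro n
    rw [hP0def, ← hD0A, hDun n, hDun 0,
      Directed.measure_iUnion ((hDKmono n).directed_le),
      Directed.measure_iUnion ((hDKmono 0).directed_le)]
    exact iSup_congr fun K => hDKlaw n K
  have hK1 : ∀ (n : ℕ) (B : Set (Fin n → ℤ)), MeasurableSet B →
      μ ((fun ω (i : Fin n) => X i ω) ⁻¹' B ∩ D n)
        = μ ((fun ω (i : Fin n) => X i ω) ⁻¹' B) * P0 := by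
    intro n B hB
    have hmono : Monotone fun K => (fun ω (i : Fin n) => X i ω) ⁻¹' B ∩ DK n K :=
      fun K L h => Set.inter_subset_inter_right _ (hDKmono n h)
    calc μ ((fun ω (i : Fin n) => X i ω) ⁻¹' B ∩ D n)
        = μ (⋃ K, ((fun ω (i : Fin n) => X i ω) ⁻¹' B ∩ DK n K)) := by
          rw [hDun n, Set.inter_iUnion]
      _ = ⨆ K, μ ((fun ω (i : Fin n) => X i ω) ⁻¹' B ∩ DK n K) :=
          Directed.measure_iUnion hmono.directed_le
      _ = ⨆ K, μ ((fun ω (i : Fin n) => X i ω) ⁻¹' B) * μ (DK n K) := by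
          refine iSup_congr fun K => ?_
          rw [hDKrep n K]
          exact (indep_tuple hmeas hindep n K).measure_inter_preimage_eq_mul B (TK K)
            hB (hTKmeas K)
      _ = μ ((fun ω (i : Fin n) => X i ω) ⁻¹' B) * ⨆ K, μ (DK n K) :=
          (ENNReal.mul_iSup _ _).symm
      _ = μ ((fun ω (i : Fin n) => X i ω) ⁻¹' B) * P0 := by
          rw [← Directed.measure_iUnion ((hDKmono n).directed_le), ← hDun n, hDlaw n]
  
  have hEzero : ∀ x : ℕ, E x 0 = ∅ := by
    intro x
    ext ω
    simp only [hE, Set.mem_setOf_eq, Set.mem_empty_iff_false, iff_false, not_and]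
    intro h
    rw [hS0] at h
    exact absurd h (by omega)
  have hEov : ∀ (x m : ℕ),
      E x (m+1) = {ω | ∀ i ≤ m, S i ω ≤ (x:ℤ)} ∩ {ω | (x:ℤ) + 1 + ((0:ℕ):ℤ) ≤ S (m+1) ω} := by
    intro x m
    ext ω
    simp only [hE, Set.mem_setOf_eq, Set.mem_inter_iff, Nat.cast_zero, add_zero]
    constructor
    · rintro ⟨h1, h2⟩
      exact ⟨fun i hi => h2 i (Nat.lt_succ_of_le hi), by omega⟩
    · rintro ⟨h1, h2⟩
      exact ⟨by omega, fun i hi => h1 i (Nat.lt_succ_iff.mp hi)⟩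
  have hK3 : ∀ (x n : ℕ), μ (E x n ∩ {ω | (x:ℤ) + 2 ≤ S n ω})
      = ENNReal.ofReal r * μ (E x n) := by
    intro x n
    match n with
    | 0 => rw [hEzero x]; simp
    | Nat.succ m =>
      have h2 : E x (m+1) ∩ {ω | (x:ℤ) + 2 ≤ S (m+1) ω}
          = {ω | ∀ i ≤ m, S i ω ≤ (x:ℤ)} ∩ {ω | (x:ℤ) + 1 + ((1:ℕ):ℤ) ≤ S (m+1) ω} := by
        rw [hEov]
        ext ω
        simp only [Set.mem_inter_iff, Set.mem_setOf_eq, Nat.cast_zero, Nat.cast_one, add_zero]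
        constructor
        · rintro ⟨⟨h1, h2⟩, h3⟩
          exact ⟨h1, by omega⟩
        · rintro ⟨h1, h2⟩
          exact ⟨⟨h1, by omega⟩, by omega⟩
      rw [h2, hEov x m,
        overshoot hmeas hindep hr.le htail' S hS (x:ℤ) (Int.natCast_nonneg x) m 1, pow_one]
  have hK4 : ∀ (x n : ℕ), μ (E x n ∩ {ω | S n ω = (x:ℤ) + 1})
      = ENNReal.ofReal (1 - r) * μ (E x n) := by
    intro x n
    have hsplit : E x n
        = (E x n ∩ {ω | S n ω = (x:ℤ) + 1}) ∪ (E x n ∩ {ω | (x:ℤ) + 2 ≤ S n ω}) := by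
      ext ω
      constructor
      · intro h
        have hx1 : (x:ℤ) < S n ω := ((hmemE x n ω).mp h).1
        by_cases heq : S n ω = (x:ℤ) + 1
        · exact Or.inl ⟨h, heq⟩
        · exact Or.inr ⟨h, by simp only [Set.mem_setOf_eq]; omega⟩
      · rintro (⟨h, -⟩ | ⟨h, -⟩) <;> exact h
    have hdisj2 : Disjoint (E x n ∩ {ω | S n ω = (x:ℤ) + 1})
        (E x n ∩ {ω | (x:ℤ) + 2 ≤ S n ω}) := by
      refine Set.disjoint_left.mpr ?_
      rintro ω ⟨-, heq⟩ ⟨-, hge⟩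
      simp only [Set.mem_setOf_eq] at heq hge
      omega
    have hadd : μ (E x n)
        = μ (E x n ∩ {ω | S n ω = (x:ℤ) + 1}) + μ (E x n ∩ {ω | (x:ℤ) + 2 ≤ S n ω}) := by
      conv_lhs => rw [hsplit]
      exact measure_union hdisj2
        ((hEmeas x n).inter (measurableSet_le measurable_const (hSmeas n)))
    rw [hK3 x n] at hadd
    have hsum : ENNReal.ofReal (1 - r) * μ (E x n) + ENNReal.ofReal r * μ (E x n)
        = μ (E x n) := by
      rw [← add_mul, ← ENNReal.ofReal_add (by linarith) hr.le,
        show (1 - r) + r = 1 by ring, ENNReal.ofReal_one, one_mul]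
    have hc : ENNReal.ofReal r * μ (E x n) ≠ ⊤ :=
      ENNReal.mul_ne_top ENNReal.ofReal_ne_top (measure_ne_top μ _)
    exact WithTop.add_right_cancel hc (hadd.symm.trans hsum.symm)
  have hK5 : ∀ (x n : ℕ), A (x+1) ∩ E x n
      = (E x n ∩ {ω | (x:ℤ) + 2 ≤ S n ω})
        ∪ ((E x n ∩ {ω | S n ω = (x:ℤ) + 1}) ∩ D n) := by
    intro x n
    ext ω
    constructor
    · rintro ⟨⟨m, hm⟩, hEω⟩
      have hm' : (x:ℤ) + 1 < S m ω := by push_cast at hm; omega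
      have hx1 : (x:ℤ) < S n ω := ((hmemE x n ω).mp hEω).1
      by_cases hge : (x:ℤ) + 2 ≤ S n ω
      · exact Or.inl ⟨hEω, hge⟩
      · have heq : S n ω = (x:ℤ) + 1 := by omega
        have hnm : n < m := by
          rcases Nat.lt_trichotomy m n with h | h | h
          · have := ((hmemE x n ω).mp hEω).2 m h
            omega
          · subst h; omega
          · exact h
        refine Or.inr ⟨⟨hEω, heq⟩, ⟨m - n, ?_⟩⟩
        have hmn : n + (m - n) = m := by omega
        have h5 := hSadd n (m - n) ω
        rw [hmn] at h5
        try simp only [Set.mem_setOf_eq]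
        omega
    · rintro (⟨hEω, hge⟩ | ⟨⟨hEω, heq⟩, t, ht⟩)
      · try simp only [Set.mem_setOf_eq] at hge
        exact ⟨⟨n, by push_cast; omega⟩, hEω⟩
      · try simp only [Set.mem_setOf_eq] at heq ht
        refine ⟨⟨n + t, ?_⟩, hEω⟩
        have h5 := hSadd n t ω
        push_cast
        omega
  have hAsub : ∀ x : ℕ, A (x+1) ⊆ A x := by
    rintro x ω ⟨m, hm⟩
    exact ⟨m, by push_cast at hm ⊢; omega⟩
  set qE : ENNReal := ENNReal.ofReal r + ENNReal.ofReal (1 - r) * P0 with hqE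
  have hrec : ∀ x : ℕ, μ (A (x+1)) = qE * μ (A x) := by
    intro x
    have hcover : A (x+1) = ⋃ n, (A (x+1) ∩ E x n) := by
      rw [← Set.inter_iUnion, ← hEunion x]
      exact (Set.inter_eq_self_of_subset_left (hAsub x)).symm
    have hdisjc : Pairwise (Function.onFun Disjoint fun n => A (x+1) ∩ E x n) :=
      fun n m hnm => (hEdisj x hnm).mono Set.inter_subset_right Set.inter_subset_right
    have hmeas5 : ∀ n, MeasurableSet (A (x+1) ∩ E x n) :=
      fun n => (hAmeas _).inter (hEmeas x n)
    have hterm : ∀ n, μ (A (x+1) ∩ E x n) = qE * μ (E x n) := by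
      intro n
      have hdisj6 : Disjoint (E x n ∩ {ω | (x:ℤ) + 2 ≤ S n ω})
          ((E x n ∩ {ω | S n ω = (x:ℤ) + 1}) ∩ D n) := by
        refine Set.disjoint_left.mpr ?_
        rintro ω ⟨-, hge⟩ ⟨⟨-, heq⟩, -⟩
        simp only [Set.mem_setOf_eq] at heq hge
        omega
      have hmeas6 : MeasurableSet ((E x n ∩ {ω | S n ω = (x:ℤ) + 1}) ∩ D n) :=
        ((hEmeas x n).inter ((hSmeas n) (measurableSet_singleton _))).inter (hDmeas n)
      -- independence step
      have hps : ∀ (ω : Ω) (i : ℕ), i ≤ n → psumE (fun j : Fin n => X j ω) i = S i ω := by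
        intro ω i hi
        rw [hS]
        exact Finset.sum_congr rfl fun j hj =>
          dif_pos (lt_of_lt_of_le (Finset.mem_range.mp hj) hi)
      set BE : Set (Fin n → ℤ) :=
        {v | ((x:ℤ) < psumE v n ∧ ∀ i < n, psumE v i ≤ (x:ℤ)) ∧ psumE v n = (x:ℤ) + 1}
        with hBE
      have hBEmeas : MeasurableSet BE := by
        have : BE = (({v : Fin n → ℤ | (x:ℤ) < psumE v n}
            ∩ ⋂ i, ⋂ (_ : i < n), {v : Fin n → ℤ | psumE v i ≤ (x:ℤ)})
            ∩ {v : Fin n → ℤ | psumE v n = (x:ℤ) + 1}) := by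
          ext v; simp [hBE]
        rw [this]
        exact ((measurableSet_lt measurable_const measurable_psumE).inter
          (MeasurableSet.iInter fun i => MeasurableSet.iInter fun _ =>
            measurableSet_le measurable_psumE measurable_const)).inter
          (measurable_psumE (measurableSet_singleton _))
      have hrepE : E x n ∩ {ω | S n ω = (x:ℤ) + 1}
          = (fun ω (i : Fin n) => X i ω) ⁻¹' BE := by
        ext ω
        simp only [Set.mem_inter_iff, Set.mem_setOf_eq, Set.mem_preimage, hE, hBE]
        constructor
        · rintro ⟨⟨h1, h2⟩, h3⟩
          exact ⟨⟨by rw [hps ω n le_rfl]; exact h1,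
            fun i hi => by rw [hps ω i hi.le]; exact h2 i hi⟩,
            by rw [hps ω n le_rfl]; exact h3⟩
        · rintro ⟨⟨h1, h2⟩, h3⟩
          exact ⟨⟨by rw [← hps ω n le_rfl]; exact h1,
            fun i hi => by rw [← hps ω i hi.le]; exact h2 i hi⟩,
            by rw [← hps ω n le_rfl]; exact h3⟩
      have hindepD : μ ((E x n ∩ {ω | S n ω = (x:ℤ) + 1}) ∩ D n)
          = μ (E x n ∩ {ω | S n ω = (x:ℤ) + 1}) * P0 := by
        rw [hrepE]
        exact hK1 n BE hBEmeas
      rw [hK5 x n, measure_union hdisj6 hmeas6, hK3 x n, hindepD, hK4 x n, hqE]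
      ring
    rw [hcover, measure_iUnion hdisjc hmeas5]
    calc (∑' n, μ (A (x+1) ∩ E x n)) = ∑' n, qE * μ (E x n) := tsum_congr hterm
      _ = qE * ∑' n, μ (E x n) := ENNReal.tsum_mul_left
      _ = qE * μ (A x) := by
          rw [← measure_iUnion (hEdisj x) (hEmeas x), ← hEunion x]
  have hAx : ∀ x : ℕ, μ (A x) = qE ^ x * P0 := by
    intro x
    induction x with
    | zero => simp [hP0def]
    | succ n ih => rw [hrec n, ih, pow_succ]; ring
  
  -- conversion to real numbers
  have hA0set : A 0 = {ω | ∃ n, 0 < S n ω} := by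
    ext ω; simp [hA]
  have hP0toReal : P0.toReal = p := by
    rw [hp, hP0def, hA0set]
  have hqEne : qE ≠ ⊤ := by
    rw [hqE]
    exact ENNReal.add_ne_top.mpr ⟨ENNReal.ofReal_ne_top,
      ENNReal.mul_ne_top ENNReal.ofReal_ne_top (measure_ne_top μ _)⟩
  have hqEtoReal : qE.toReal = r + (1 - r) * p := by
    rw [hqE, ENNReal.toReal_add ENNReal.ofReal_ne_top
        (ENNReal.mul_ne_top ENNReal.ofReal_ne_top (measure_ne_top μ _)),
      ENNReal.toReal_mul, ENNReal.toReal_ofReal hr.le,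
      ENNReal.toReal_ofReal (by linarith : (0:ℝ) ≤ 1 - r), hP0toReal]
  have hform : ∀ x : ℕ, (μ (A x)).toReal = p * (1 - (1 - p) * (1 - r)) ^ x := by
    intro x
    rw [hAx x, ENNReal.toReal_mul, ENNReal.toReal_pow, hqEtoReal, hP0toReal,
      show r + (1 - r) * p = 1 - (1 - p) * (1 - r) by ring]
    ring
  -- p < 1 via the strong law of large numbers
  have hple : p ≤ 1 := by
    rw [← hP0toReal]
    have h1 : P0 ≤ 1 := prob_le_one
    calc P0.toReal ≤ (1 : ENNReal).toReal := ENNReal.toReal_mono ENNReal.one_ne_top h1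
      _ = 1 := by simp
  have hcast : Measurable fun z : ℤ => (z : ℝ) := measurable_from_top
  have hYindep : Pairwise (Function.onFun (fun f g => IndepFun f g μ) fun n ω => (X n ω : ℝ)) := by
    intro i j hij
    exact (hindep.indepFun hij).comp hcast hcast
  have hYident : ∀ i, IdentDistrib (fun ω => (X i ω : ℝ)) (fun ω => (X 0 ω : ℝ)) μ μ := by
    intro i
    have h0 : IdentDistrib (X i) (X 0) μ μ :=
      ⟨(hmeas i).aemeasurable, (hmeas 0).aemeasurable, hident i⟩
    exact h0.comp hcast
  have hslln := strong_law_ae_real (fun n ω => (X n ω : ℝ)) hint hYindep hYident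
  have hsubset : ∀ ω, Tendsto (fun n : ℕ => (∑ i ∈ Finset.range n, (X i ω : ℝ)) / n) atTop
      (𝓝 (∫ ω, (X 0 ω : ℝ) ∂μ)) → ∃ x : ℕ, ∀ n, S n ω ≤ (x:ℤ) := by
    intro ω hω
    have hev : ∀ᶠ n : ℕ in atTop, (∑ i ∈ Finset.range n, (X i ω : ℝ)) / n < 0 :=
      hω.eventually_lt_const hdrift
    obtain ⟨N, hN⟩ := Filter.eventually_atTop.mp hev
    have hneg : ∀ n, max N 1 ≤ n → S n ω < 0 := by
      intro n hn
      have h1 := hN n (le_trans (le_max_left _ _) hn)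
      have hnpos : (0:ℝ) < n := by
        have h2 : 1 ≤ n := le_trans (le_max_right _ _) hn
        exact_mod_cast Nat.lt_of_lt_of_le Nat.zero_lt_one h2
      have hsum : (∑ i ∈ Finset.range n, (X i ω : ℝ)) < 0 := by
        by_contra hc
        push_neg at hc
        exact absurd (div_nonneg hc hnpos.le) (not_le.mpr h1)
      have h3 : ((S n ω : ℤ) : ℝ) < 0 := by
        rw [hS]
        push_cast
        exact hsum
      exact_mod_cast h3
    refine ⟨Finset.sup (Finset.range (max N 1 + 1)) fun n => (S n ω).toNat, fun n => ?_⟩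
    rcases le_or_gt n (max N 1) with h | h
    · have hmem : n ∈ Finset.range (max N 1 + 1) := Finset.mem_range.mpr (by omega)
      have h4 : (S n ω).toNat ≤ Finset.sup (Finset.range (max N 1 + 1))
          (fun n => (S n ω).toNat) := Finset.le_sup (f := fun n => (S n ω).toNat) hmem
      omega
    · have h5 := hneg n (le_of_lt h)
      have h6 : (0:ℤ) ≤ ((Finset.sup (Finset.range (max N 1 + 1))
          fun n => (S n ω).toNat : ℕ) : ℤ) := Int.natCast_nonneg _
      omega
  have hiA : μ (⋂ x : ℕ, A x) = 0 := by
    refine measure_mono_null ?_ (ae_iff.mp hslln)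
    intro ω hω
    simp only [Set.mem_setOf_eq]
    intro hT
    obtain ⟨x, hx⟩ := hsubset ω hT
    obtain ⟨n, hn⟩ := Set.mem_iInter.mp hω x
    exact absurd hn (not_lt.mpr (hx n))
  have hanti : Antitone A := by
    intro x y hxy ω
    rintro ⟨m, hm⟩
    refine ⟨m, ?_⟩
    have : (x:ℤ) ≤ (y:ℤ) := by exact_mod_cast hxy
    omega
  have htend : Tendsto (fun x : ℕ => μ (A x)) atTop (𝓝 0) := by
    have h := tendsto_measure_iInter_atTop (fun x => (hAmeas x).nullMeasurableSet)
      hanti ⟨0, measure_ne_top μ _⟩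
    rw [hiA] at h
    exact h
  have hplt : p < 1 := by
    refine lt_of_le_of_ne hple fun hpe => ?_
    have hP0one : P0 = 1 := by
      refine (ENNReal.toReal_eq_toReal_iff' (measure_ne_top μ _) ENNReal.one_ne_top).mp ?_
      rw [hP0toReal, hpe]
      simp
    have hqEone : qE = 1 := by
      rw [hqE, hP0one, mul_one, ← ENNReal.ofReal_add hr.le (by linarith : (0:ℝ) ≤ 1 - r)]
      norm_num
    have hconst : ∀ x : ℕ, μ (A x) = 1 := fun x => by
      rw [hAx x, hqEone, one_pow, hP0one, mul_one]
    simp only [hconst] at htend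
    have h01 : (0 : ENNReal) = 1 := tendsto_nhds_unique htend tendsto_const_nhds
    exact zero_ne_one h01
  refine ⟨hplt, fun x => ?_⟩
  have h := hform x
  simp only [hA] at h
  exact h
end

section
/- For 0 < a < 1, the power series U(s) = Σ_{k=1}^∞ (1/(2k-1))·C(2k-1, k)·(a^{k-1}/(1+a)^{2k-1})·s^k equals ((1+a)/(2a))·(1 - sqrt(1 - 4as/(1+a)^2)) for |s| < 1 + (1-a)^2/(4a). -/
open Finset

lemma myCentralBinom_le (n : ℕ) : n.centralBinom ≤ 4 ^ n := by
  have h : (2*n).choose n ≤ ∑ m ∈ range (2*n+1), (2*n).choose m :=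
    Finset.single_le_sum (fun i _ => Nat.zero_le _) (by simp; omega)
  calc n.centralBinom = (2*n).choose n := rfl
    _ ≤ 2 ^ (2*n) := by rw [← Nat.sum_range_choose]; exact h
    _ = 4 ^ n := by rw [pow_mul]; norm_num

lemma myCatalan_le (n : ℕ) : (catalan n : ℝ) ≤ 4 ^ n := by
  have h : catalan n ≤ 4 ^ n := by
    rw [catalan_eq_centralBinom_div]
    exact le_trans (Nat.div_le_self _ _) (myCentralBinom_le n)
  exact_mod_cast h

lemma myCatalan_conv (n : ℕ) :
    catalan (n+1) = ∑ k ∈ range (n+1), catalan k * catalan (n - k) := by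
  rw [catalan_succ, Finset.sum_range (fun k => catalan k * catalan (n - k))]

lemma mySummable {x : ℝ} (hx : |x| < 1/4) :
    Summable (fun n => ‖(catalan n : ℝ) * x ^ n‖) := by
  have h4 : (0:ℝ) ≤ 4 * |x| := by positivity
  have h1 : 4 * |x| < 1 := by linarith
  refine Summable.of_nonneg_of_le (fun n => norm_nonneg _) (fun n => ?_)
    (summable_geometric_of_lt_one h4 h1)
  have : ‖(catalan n : ℝ) * x ^ n‖ = (catalan n : ℝ) * |x| ^ n := by
    rw [norm_mul, norm_pow, Real.norm_eq_abs, Real.norm_eq_abs,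
      abs_of_nonneg (by positivity : (0:ℝ) ≤ (catalan n : ℝ))]
  rw [this, mul_pow]
  gcongr
  exact myCatalan_le n

lemma myNormEq (x : ℝ) (n : ℕ) :
    ‖(catalan n : ℝ) * x ^ n‖ = (catalan n : ℝ) * |x| ^ n := by
  rw [norm_mul, norm_pow, Real.norm_eq_abs, Real.norm_eq_abs,
    abs_of_nonneg (by positivity : (0:ℝ) ≤ (catalan n : ℝ))]

-- finite Cauchy inequality for nonneg terms
lemma myConvLe {a : ℕ → ℝ} (ha : ∀ n, 0 ≤ a n) (N : ℕ) :
    ∑ n ∈ range N, ∑ k ∈ range (n+1), a k * a (n - k) ≤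
      (∑ n ∈ range N, a n) ^ 2 := by
  have h1 : ∀ n, ∑ k ∈ range (n+1), a k * a (n - k)
      = ∑ p ∈ Finset.HasAntidiagonal.antidiagonal n, a p.1 * a p.2 := by
    intro n
    rw [Finset.Nat.sum_antidiagonal_eq_sum_range_succ (fun i j => a i * a j)]
  simp_rw [h1]
  have hdisj : Set.PairwiseDisjoint ↑(range N) (Finset.HasAntidiagonal.antidiagonal (A := ℕ)) := by
    intro i _ j _ hij
    simp only [Function.onFun, Finset.disjoint_left]
    intro p hp hq
    rw [Finset.HasAntidiagonal.mem_antidiagonal] at hp hq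
    exact hij (hp ▸ hq)
  rw [← Finset.sum_biUnion hdisj]
  have hsub : (range N).biUnion Finset.HasAntidiagonal.antidiagonal ⊆ range N ×ˢ range N := by
    intro p hp
    simp only [Finset.mem_biUnion, Finset.mem_range, Finset.HasAntidiagonal.mem_antidiagonal] at hp
    obtain ⟨i, hi, hpi⟩ := hp
    simp only [Finset.mem_product, Finset.mem_range]
    omega
  calc ∑ p ∈ (range N).biUnion Finset.HasAntidiagonal.antidiagonal, a p.1 * a p.2
      ≤ ∑ p ∈ range N ×ˢ range N, a p.1 * a p.2 :=
        Finset.sum_le_sum_of_subset_of_nonneg hsub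
          (fun p _ _ => mul_nonneg (ha _) (ha _))
    _ = (∑ n ∈ range N, a n) ^ 2 := by
        rw [sq, Finset.sum_mul_sum, Finset.sum_product]

-- S = 1 + x S^2 for any x with |x| < 1/4
lemma myQuad {x : ℝ} (hx : |x| < 1/4) :
    (∑' n, (catalan n : ℝ) * x ^ n)
      = 1 + x * (∑' n, (catalan n : ℝ) * x ^ n) ^ 2 := by
  set S := ∑' n, (catalan n : ℝ) * x ^ n with hSdef
  have hsn := mySummable hx
  have hS : HasSum (fun n => (catalan n : ℝ) * x ^ n) S := hsn.of_norm.hasSum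
  have hmul := hasSum_sum_range_mul_of_summable_norm hsn hsn
  have heq : (fun n => ∑ k ∈ range (n+1),
        ((catalan k : ℝ) * x ^ k) * ((catalan (n-k) : ℝ) * x ^ (n-k)))
      = fun n => (catalan (n+1) : ℝ) * x ^ n := by
    funext n
    rw [myCatalan_conv n]
    push_cast
    rw [Finset.sum_mul]
    refine Finset.sum_congr rfl (fun k hk => ?_)
    rw [Finset.mem_range] at hk
    have : x ^ k * x ^ (n - k) = x ^ n := by
      rw [← pow_add]; congr 1; omega
    calc (catalan k : ℝ) * x ^ k * ((catalan (n-k) : ℝ) * x ^ (n-k))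
        = ((catalan k : ℝ) * (catalan (n-k) : ℝ)) * (x ^ k * x ^ (n-k)) := by ring
      _ = (catalan k : ℝ) * (catalan (n-k) : ℝ) * x ^ n := by rw [this]
  rw [heq] at hmul
  -- hmul : HasSum (fun n => cat (n+1) * x ^ n) (S * S)
  have hshift : HasSum (fun n => (catalan (n+1) : ℝ) * x ^ (n+1)) (S - 1) := by
    have := (hasSum_nat_add_iff' (f := fun n => (catalan n : ℝ) * x ^ n) 1).mpr hS
    simpa using this
  have hmul' : HasSum (fun n => (catalan (n+1) : ℝ) * x ^ (n+1)) (x * (S * S)) := by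
    have h := hmul.mul_left x
    have : (fun i => x * ((catalan (i+1) : ℝ) * x ^ i))
        = fun n => (catalan (n+1) : ℝ) * x ^ (n+1) := by
      funext i; rw [pow_succ]; ring
    rwa [this] at h
  have := hshift.unique hmul'
  rw [hSdef] at this ⊢
  nlinarith [this]

lemma myChoose (k : ℕ) : (2*k+1).choose (k+1) = (2*k+1) * catalan k := by
  have h1 : (2*k+1) * (2*k).choose k = (2*k+1).choose (k+1) * (k+1) :=
    Nat.add_one_mul_choose_eq (2*k) k
  have h2 : (k+1) * catalan k = (2*k).choose k := succ_mul_catalan_eq_centralBinom k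
  have h4 : ((2*k+1).choose (k+1)) * (k+1) = ((2*k+1) * catalan k) * (k+1) := by
    rw [← h1, ← h2]; ring
  exact Nat.eq_of_mul_eq_mul_right (Nat.succ_pos k) h4

lemma myGen {x : ℝ} (hx : |x| < 1/4) :
    HasSum (fun n => 2 * (catalan n : ℝ) * x ^ (n+1)) (1 - Real.sqrt (1 - 4*x)) := by
  by_cases hx0 : x = 0
  · subst hx0
    have : (fun n : ℕ => 2 * (catalan n : ℝ) * (0:ℝ) ^ (n+1)) = fun _ => 0 := by
      funext n; simp
    rw [this]
    simpa using hasSum_zero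
  · have hy0 : 0 < |x| := abs_pos.mpr hx0
    set y := |x| with hydef
    have hy : y < 1/4 := hx
    have hsy : Summable (fun n => (catalan n : ℝ) * y ^ n) := by
      have := mySummable hx
      simpa [myNormEq] using this
    set Sy := ∑' n, (catalan n : ℝ) * y ^ n with hSydef
    have hSy : HasSum (fun n => (catalan n : ℝ) * y ^ n) Sy := hsy.hasSum
    have h14 : (0:ℝ) ≤ 1 - 4*y := by linarith
    set σ := Real.sqrt (1 - 4*y) with hσdef
    have hσsq : σ^2 = 1 - 4*y := Real.sq_sqrt h14
    have hσ0 : 0 ≤ σ := Real.sqrt_nonneg _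
    have hσ1 : σ ≤ 1 := by
      rw [hσdef]
      calc Real.sqrt (1 - 4*y) ≤ Real.sqrt 1 := Real.sqrt_le_sqrt (by linarith)
        _ = 1 := Real.sqrt_one
    set r := (1 - σ)/(2*y) with hrdef
    have hr0 : 0 ≤ r := by
      apply div_nonneg (by linarith) (by linarith)
    have hfix : 1 + y * r^2 = r := by
      rw [hrdef]
      field_simp
      nlinarith [hσsq]
    have hterm : ∀ i : ℕ, (catalan (i+1) : ℝ) * y ^ (i+1)
        = y * ∑ k ∈ range (i+1),
            ((catalan k : ℝ) * y ^ k) * ((catalan (i-k) : ℝ) * y ^ (i-k)) := by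
      intro i
      rw [myCatalan_conv i]
      push_cast
      rw [Finset.mul_sum, Finset.sum_mul]
      refine Finset.sum_congr rfl (fun k hk => ?_)
      rw [Finset.mem_range] at hk
      have hpow : y ^ k * y ^ (i - k) = y ^ i := by
        rw [← pow_add]; congr 1; omega
      calc (catalan k : ℝ) * (catalan (i-k) : ℝ) * y ^ (i+1)
          = y * (((catalan k : ℝ) * (catalan (i-k) : ℝ)) * (y ^ k * y ^ (i-k))) := by
            rw [hpow, pow_succ]; ring
        _ = y * ((catalan k : ℝ) * y ^ k * ((catalan (i-k) : ℝ) * y ^ (i-k))) := by ring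
    have hPpos : ∀ N, 0 ≤ ∑ n ∈ range N, (catalan n : ℝ) * y ^ n := by
      intro N
      apply Finset.sum_nonneg
      intro n _
      positivity
    have hPle : ∀ N, ∑ n ∈ range N, (catalan n : ℝ) * y ^ n ≤ r := by
      intro N
      induction N with
      | zero => simpa using hr0
      | succ N ih =>
        rw [Finset.sum_range_succ']
        simp only [pow_zero, catalan_zero, Nat.cast_one, mul_one]
        have hD : ∑ i ∈ range N, (catalan (i+1) : ℝ) * y ^ (i+1)
            ≤ y * (∑ n ∈ range N, (catalan n : ℝ) * y ^ n) ^ 2 := by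
          calc ∑ i ∈ range N, (catalan (i+1) : ℝ) * y ^ (i+1)
              = y * ∑ i ∈ range N, ∑ k ∈ range (i+1),
                  ((catalan k : ℝ) * y ^ k) * ((catalan (i-k) : ℝ) * y ^ (i-k)) := by
                rw [Finset.mul_sum]
                exact Finset.sum_congr rfl (fun i _ => hterm i)
            _ ≤ y * (∑ n ∈ range N, (catalan n : ℝ) * y ^ n) ^ 2 := by
                apply mul_le_mul_of_nonneg_left _ (le_of_lt hy0)
                exact myConvLe (fun n => by positivity) N
        have h2 : y * (∑ n ∈ range N, (catalan n : ℝ) * y ^ n) ^ 2 ≤ y * r ^ 2 := by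
          apply mul_le_mul_of_nonneg_left _ (le_of_lt hy0)
          exact pow_le_pow_left₀ (hPpos N) ih 2
        linarith [hfix]
    have hSyle : Sy ≤ r := le_of_tendsto' hSy.tendsto_sum_nat hPle
    set S := ∑' n, (catalan n : ℝ) * x ^ n with hSdef
    have hS : HasSum (fun n => (catalan n : ℝ) * x ^ n) S := (mySummable hx).of_norm.hasSum
    have hSabs : |S| ≤ Sy := by
      have h := norm_tsum_le_tsum_norm (mySummable hx)
      rw [Real.norm_eq_abs] at h
      calc |S| ≤ ∑' n, ‖(catalan n : ℝ) * x ^ n‖ := h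
        _ = Sy := by rw [hSydef]; exact tsum_congr (fun n => myNormEq x n)
    have hquad := myQuad hx
    rw [← hSdef] at hquad
    have hT0 : 0 ≤ 1 - 2*x*S := by
      have h1 : |2*x*S| = 2*y*|S| := by
        rw [abs_mul, abs_mul]; simp [hydef]
      have h2 : 2*y*|S| ≤ 2*y*Sy := by
        apply mul_le_mul_of_nonneg_left hSabs (by linarith)
      have h3 : 2*y*r = 1 - σ := by
        rw [hrdef]; field_simp
      have h4 : 2*x*S ≤ 1 - σ := by
        calc 2*x*S ≤ |2*x*S| := le_abs_self _
          _ = 2*y*|S| := h1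
          _ ≤ 2*y*Sy := h2
          _ ≤ 2*y*r := by apply mul_le_mul_of_nonneg_left hSyle (by linarith)
          _ = 1 - σ := h3
      linarith
    have hTsq : (1 - 2*x*S)^2 = 1 - 4*x := by nlinarith [hquad]
    have hsqrt : Real.sqrt (1 - 4*x) = 1 - 2*x*S := by
      rw [← hTsq, Real.sqrt_sq hT0]
    have h := hS.mul_left (2*x)
    have hfun : (fun n => (2*x) * ((catalan n : ℝ) * x ^ n))
        = fun n => 2 * (catalan n : ℝ) * x ^ (n+1) := by
      funext n; rw [pow_succ]; ring
    rw [hfun] at h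
    have : 1 - Real.sqrt (1 - 4*x) = 2*x*S := by rw [hsqrt]; ring
    rwa [this]

theorem stmt_14 (a : ℝ) (ha0 : 0 < a) (ha1 : a < 1) (s : ℝ)
    (hs : |s| < 1 + (1 - a) ^ 2 / (4 * a)) :
    HasSum
      (fun k : ℕ =>
        (1 / (2 * (k + 1) - 1 : ℝ)) * ((2 * (k + 1) - 1).choose (k + 1) : ℝ) *
          (a ^ k / (1 + a) ^ (2 * (k + 1) - 1)) * s ^ (k + 1))
      (((1 + a) / (2 * a)) * (1 - Real.sqrt (1 - 4 * a * s / (1 + a) ^ 2))) := by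
  have ha1' : (0:ℝ) < 1 + a := by linarith
  have hs' : a * |s| < (1 + a)^2 / 4 := by
    have h := (mul_lt_mul_iff_right₀ ha0).mpr hs
    have heq : a * (1 + (1 - a)^2/(4*a)) = (1 + a)^2/4 := by
      field_simp
      ring
    rw [heq] at h
    exact h
  have hx : |a * s / (1 + a)^2| < 1/4 := by
    rw [abs_div, abs_mul, abs_of_pos ha0,
      abs_of_nonneg (by positivity : (0:ℝ) ≤ (1 + a)^2)]
    rw [div_lt_iff₀ (by positivity)]
    nlinarith [hs']
  have hG := (myGen hx).mul_left ((1 + a)/(2*a))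
  have hval : ((1 + a)/(2*a)) * (1 - Real.sqrt (1 - 4*(a * s / (1 + a)^2)))
      = ((1 + a) / (2 * a)) * (1 - Real.sqrt (1 - 4 * a * s / (1 + a) ^ 2)) := by
    have : 4*(a * s / (1 + a)^2) = 4 * a * s / (1 + a) ^ 2 := by ring
    rw [this]
  rw [hval] at hG
  have hfun : (fun k : ℕ => ((1 + a)/(2*a)) *
        (2 * (catalan k : ℝ) * (a * s / (1 + a)^2) ^ (k+1)))
      = fun k : ℕ =>
        (1 / (2 * (k + 1) - 1 : ℝ)) * ((2 * (k + 1) - 1).choose (k + 1) : ℝ) *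
          (a ^ k / (1 + a) ^ (2 * (k + 1) - 1)) * s ^ (k + 1) := by
    funext k
    have hnat : 2 * (k + 1) - 1 = 2 * k + 1 := by omega
    rw [hnat, myChoose k]
    have hne : (2 * ((k:ℝ) + 1) - 1) ≠ 0 := by
      have : (0:ℝ) ≤ (k:ℝ) := Nat.cast_nonneg k
      intro h; nlinarith
    push_cast
    rw [div_pow, mul_pow, ← pow_mul, show 2*(k+1) = (2*k+1)+1 from by ring,
      pow_succ (1+a), pow_succ a]
    field_simp
    ring
  rwa [hfun] at hG
end

section
/- For 0 < a < 1, the numbers p_k = (1/(2k-1))·C(2k-1,k)·a^{k-1}/(1+a)^{2k-1}, k = 1, 2, …, are nonnegative and sum to 1, and Σ_{k=1}^∞ k·p_k = 1/(1-a). -/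
open Finset

lemma choose_eq_catalan (m : ℕ) : (2*m+1).choose (m+1) = (2*m+1) * catalan m := by
  have h := Nat.add_one_mul_choose_eq (2*m) m
  have hc := succ_mul_catalan_eq_centralBinom m
  have h2 : (2*m+1).choose (m+1) * (m+1) = ((2*m+1) * catalan m) * (m+1) := by
    rw [← h]
    rw [Nat.centralBinom_eq_two_mul_choose] at hc
    rw [← hc]
    ring
  exact Nat.eq_of_mul_eq_mul_right (Nat.succ_pos m) h2

lemma centralBinom_le_four_pow (n : ℕ) : Nat.centralBinom n ≤ 4 ^ n := by
  have h1 : Nat.centralBinom n ≤ ∑ m ∈ range (2*n+1), (2*n).choose m :=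
    Finset.single_le_sum (f := fun m => (2*n).choose m) (fun i _ => Nat.zero_le _)
      (by simp [Finset.mem_range]; omega)
  calc Nat.centralBinom n ≤ 2 ^ (2*n) := by rwa [Nat.sum_range_choose] at h1
    _ = 4 ^ n := by rw [pow_mul]; norm_num

lemma conv_cb (n : ℕ) :
    2 * ∑ ij ∈ antidiagonal n, catalan ij.1 * Nat.centralBinom ij.2
      = Nat.centralBinom (n+1) := by
  rw [Nat.sum_antidiagonal_eq_sum_range_succ (fun i j => catalan i * Nat.centralBinom j) n]
  have hD : ∑ i ∈ range (n+1), catalan i * Nat.centralBinom (n - i)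
      = ∑ i ∈ range (n+1), catalan (n - i) * ((i+1) * catalan i) := by
    rw [← Finset.sum_range_reflect (fun i => catalan (n - i) * ((i+1) * catalan i)) (n+1)]
    refine Finset.sum_congr rfl fun i hi => ?_
    simp only [Finset.mem_range] at hi
    have h1 : n + 1 - 1 - i = n - i := by omega
    have h2 : n - (n - i) = i := by omega
    rw [h1, h2, ← succ_mul_catalan_eq_centralBinom]
  have key : 2 * ∑ i ∈ range (n+1), catalan i * Nat.centralBinom (n - i)
      = (n+2) * ∑ i ∈ range (n+1), catalan i * catalan (n - i) := by
    calc 2 * ∑ i ∈ range (n+1), catalan i * Nat.centralBinom (n - i)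
        = (∑ i ∈ range (n+1), catalan i * Nat.centralBinom (n - i))
          + ∑ i ∈ range (n+1), catalan (n - i) * ((i+1) * catalan i) := by
          rw [← hD]; ring
      _ = ∑ i ∈ range (n+1), (catalan i * ((n-i+1) * catalan (n-i))
            + catalan (n - i) * ((i+1) * catalan i)) := by
          rw [← Finset.sum_add_distrib]
          refine Finset.sum_congr rfl fun i hi => ?_
          rw [← succ_mul_catalan_eq_centralBinom]
      _ = ∑ i ∈ range (n+1), (n+2) * (catalan i * catalan (n - i)) := by
          refine Finset.sum_congr rfl fun i hi => ?_
          simp only [Finset.mem_range] at hi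
          have hsum : (n - i + 1) + (i + 1) = n + 2 := by omega
          calc catalan i * ((n-i+1) * catalan (n-i)) + catalan (n - i) * ((i+1) * catalan i)
              = ((n-i+1) + (i+1)) * (catalan i * catalan (n-i)) := by ring
            _ = (n+2) * (catalan i * catalan (n - i)) := by rw [hsum]
      _ = (n+2) * ∑ i ∈ range (n+1), catalan i * catalan (n - i) := by
          rw [Finset.mul_sum]
  rw [key]
  have hcat : catalan (n+1) = ∑ i ∈ range (n+1), catalan i * catalan (n - i) := by
    rw [catalan_succ', Nat.sum_antidiagonal_eq_sum_range_succ (fun i j => catalan i * catalan j) n]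
  rw [← hcat, ← succ_mul_catalan_eq_centralBinom]

theorem stmt_15 (a : ℝ) (ha0 : 0 < a) (ha1 : a < 1)
    (p : ℕ → ℝ)
    (hp : ∀ k : ℕ, 1 ≤ k →
      p k = (1 / (2 * k - 1 : ℝ)) * ((2 * k - 1).choose k : ℝ) *
        (a ^ (k - 1) / (1 + a) ^ (2 * k - 1))) :
    (∀ k : ℕ, 1 ≤ k → 0 ≤ p k) ∧
    HasSum (fun k : ℕ => p (k + 1)) 1 ∧
    HasSum (fun k : ℕ => ((k + 1 : ℕ) : ℝ) * p (k + 1)) (1 / (1 - a)) := by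
  have ha1' : (0:ℝ) < 1 + a := by linarith
  set x : ℝ := a / (1+a)^2 with hxdef
  have hxpos : 0 < x := by positivity
  have hx2 : x * (1+a)^2 = a := by
    rw [hxdef]; field_simp
  have h4x : 4 * x < 1 := by
    rw [hxdef, show 4 * (a/(1+a)^2) = (4*a)/(1+a)^2 by ring, div_lt_one (by positivity)]
    nlinarith [sq_nonneg (1-a)]
  set f : ℕ → ℝ := fun m => (catalan m : ℝ) * x ^ m with hfdef
  set g : ℕ → ℝ := fun m => (Nat.centralBinom m : ℝ) * x ^ m with hgdef
  have hfnonneg : ∀ m, 0 ≤ f m := fun m => by positivity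
  have hgnonneg : ∀ m, 0 ≤ g m := fun m => by positivity
  have hgle : ∀ m, g m ≤ (4*x)^m := by
    intro m
    have h1 : (Nat.centralBinom m : ℝ) ≤ (4:ℝ)^m := by
      exact_mod_cast centralBinom_le_four_pow m
    calc g m = (Nat.centralBinom m : ℝ) * x^m := rfl
      _ ≤ (4:ℝ)^m * x^m := by
          apply mul_le_mul_of_nonneg_right h1 (by positivity)
      _ = (4*x)^m := by rw [mul_pow]
  have hfleg : ∀ m, f m ≤ g m := by
    intro m
    have h1 : (catalan m : ℝ) ≤ (Nat.centralBinom m : ℝ) := by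
      have := succ_mul_catalan_eq_centralBinom m
      exact_mod_cast this ▸ Nat.le_mul_of_pos_left (catalan m) (Nat.succ_pos m)
    exact mul_le_mul_of_nonneg_right h1 (by positivity)
  have hsum4x : Summable (fun m : ℕ => (4*x)^m) :=
    summable_geometric_of_lt_one (by positivity) h4x
  have hgsum : Summable g := Summable.of_nonneg_of_le hgnonneg hgle hsum4x
  have hfsum : Summable f := Summable.of_nonneg_of_le hfnonneg hfleg hgsum
  have hfnorm : Summable (fun m => ‖f m‖) := by
    have : (fun m => ‖f m‖) = f := funext fun m => Real.norm_of_nonneg (hfnonneg m)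
    rw [this]; exact hfsum
  have hgnorm : Summable (fun m => ‖g m‖) := by
    have : (fun m => ‖g m‖) = g := funext fun m => Real.norm_of_nonneg (hgnonneg m)
    rw [this]; exact hgsum
  set S : ℝ := ∑' m, f m with hSdef
  set T : ℝ := ∑' m, g m with hTdef
  have hS : HasSum f S := hfsum.hasSum
  have hT : HasSum g T := hgsum.hasSum
  -- Cauchy product f * f
  have hcau : S * S = ∑' n, ∑ kl ∈ antidiagonal n, f kl.1 * f kl.2 :=
    tsum_mul_tsum_eq_tsum_sum_antidiagonal_of_summable_norm hfnorm hfnorm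
  have hinner : ∀ n, ∑ kl ∈ antidiagonal n, f kl.1 * f kl.2 = (catalan (n+1) : ℝ) * x^n := by
    intro n
    rw [catalan_succ']
    push_cast
    rw [Finset.sum_mul]
    refine Finset.sum_congr rfl fun kl hkl => ?_
    have hkl' : kl.1 + kl.2 = n := Finset.HasAntidiagonal.mem_antidiagonal.mp hkl
    simp only [hfdef]
    rw [← hkl', pow_add]; ring
  have hfsucc : ∀ n, f (n+1) = x * ∑ kl ∈ antidiagonal n, f kl.1 * f kl.2 := by
    intro n
    rw [hinner n]
    simp only [hfdef]
    rw [pow_succ]; ring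
  have hSeq : S = 1 + x * (S * S) := by
    have hz : S = f 0 + ∑' n, f (n+1) := Summable.tsum_eq_zero_add hfsum
    have hsucc : ∑' n, f (n+1) = x * (S * S) := by
      calc ∑' n, f (n+1) = ∑' n, x * ∑ kl ∈ antidiagonal n, f kl.1 * f kl.2 :=
            tsum_congr hfsucc
        _ = x * ∑' n, ∑ kl ∈ antidiagonal n, f kl.1 * f kl.2 := tsum_mul_left
        _ = x * (S * S) := by rw [← hcau]
    conv_lhs => rw [hz]
    rw [hsucc]
    norm_num [hfdef]
  -- partial sums bounded by 1 + a
  have hpart : ∀ N, ∑ m ∈ range N, f m ≤ 1 + a := by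
    intro N
    induction N with
    | zero => simp; linarith
    | succ N ih =>
      have h0 : 0 ≤ ∑ m ∈ range N, f m := Finset.sum_nonneg fun m _ => hfnonneg m
      have htri : ∑ i ∈ range N, ∑ kl ∈ antidiagonal i, f kl.1 * f kl.2
          ≤ (∑ m ∈ range N, f m) * (∑ m ∈ range N, f m) := by
        have hdisj : (↑(range N) : Set ℕ).PairwiseDisjoint (fun i => antidiagonal i) := by
          intro i _ j _ hij
          refine Finset.disjoint_left.mpr fun kl hki hkj => hij ?_
          rw [← Finset.HasAntidiagonal.mem_antidiagonal.mp hki, ← Finset.HasAntidiagonal.mem_antidiagonal.mp hkj]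
        have hsub : (range N).biUnion (fun i => antidiagonal i) ⊆ range N ×ˢ range N := by
          intro kl hkl
          simp only [Finset.mem_biUnion, Finset.mem_range] at hkl
          obtain ⟨i, hi, hki⟩ := hkl
          have := Finset.HasAntidiagonal.mem_antidiagonal.mp hki
          simp only [Finset.mem_product, Finset.mem_range]
          omega
        calc ∑ i ∈ range N, ∑ kl ∈ antidiagonal i, f kl.1 * f kl.2
            = ∑ kl ∈ (range N).biUnion (fun i => antidiagonal i), f kl.1 * f kl.2 :=
              (Finset.sum_biUnion hdisj).symm
          _ ≤ ∑ kl ∈ range N ×ˢ range N, f kl.1 * f kl.2 :=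
              Finset.sum_le_sum_of_subset_of_nonneg hsub
                (fun kl _ _ => mul_nonneg (hfnonneg _) (hfnonneg _))
          _ = (∑ m ∈ range N, f m) * (∑ m ∈ range N, f m) := by
              rw [Finset.sum_mul_sum, Finset.sum_product]
      rw [Finset.sum_range_succ']
      have hfz : f 0 = 1 := by simp [hfdef]
      have hstep : ∑ i ∈ range N, f (i+1)
          = x * ∑ i ∈ range N, ∑ kl ∈ antidiagonal i, f kl.1 * f kl.2 := by
        rw [Finset.mul_sum]
        exact Finset.sum_congr rfl fun i _ => hfsucc i
      rw [hfz, hstep]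
      nlinarith [mul_le_mul ih ih h0 (by linarith : (0:ℝ) ≤ 1 + a)]
  have hSle : S ≤ 1 + a := le_of_tendsto' hS.tendsto_sum_nat hpart
  have hSval : S = 1 + a := by
    have hfac : ((1+a) - S) * ((1+a) - a*S) = 0 := by
      linear_combination (-(1+a)^2) * hSeq + (-(S^2)) * hx2
    rcases mul_eq_zero.mp hfac with h | h
    · linarith
    · nlinarith
  -- Cauchy product f * g
  have hcau2 : S * T = ∑' n, ∑ kl ∈ antidiagonal n, f kl.1 * g kl.2 :=
    tsum_mul_tsum_eq_tsum_sum_antidiagonal_of_summable_norm hfnorm hgnorm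
  have hgsucc : ∀ n, g (n+1) = 2 * x * ∑ kl ∈ antidiagonal n, f kl.1 * g kl.2 := by
    intro n
    have hinner2 : ∑ kl ∈ antidiagonal n, f kl.1 * g kl.2
        = ((∑ ij ∈ antidiagonal n, catalan ij.1 * Nat.centralBinom ij.2 : ℕ) : ℝ) * x^n := by
      push_cast
      rw [Finset.sum_mul]
      refine Finset.sum_congr rfl fun kl hkl => ?_
      have hkl' : kl.1 + kl.2 = n := Finset.HasAntidiagonal.mem_antidiagonal.mp hkl
      simp only [hfdef, hgdef]
      rw [← hkl', pow_add]; ring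
    rw [hinner2]
    have hc : (Nat.centralBinom (n+1) : ℝ)
        = 2 * ((∑ ij ∈ antidiagonal n, catalan ij.1 * Nat.centralBinom ij.2 : ℕ) : ℝ) := by
      exact_mod_cast (conv_cb n).symm
    simp only [hgdef]
    rw [hc, pow_succ]; ring
  have hTeq : T = 1 + 2 * x * (S * T) := by
    have hz : T = g 0 + ∑' n, g (n+1) := Summable.tsum_eq_zero_add hgsum
    have hsucc : ∑' n, g (n+1) = 2 * x * (S * T) := by
      calc ∑' n, g (n+1) = ∑' n, 2 * x * ∑ kl ∈ antidiagonal n, f kl.1 * g kl.2 :=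
            tsum_congr hgsucc
        _ = 2 * x * ∑' n, ∑ kl ∈ antidiagonal n, f kl.1 * g kl.2 := tsum_mul_left
        _ = 2 * x * (S * T) := by rw [← hcau2]
    conv_lhs => rw [hz]
    rw [hsucc]
    norm_num [hgdef, Nat.centralBinom_zero]
  have hTval : T = (1+a)/(1-a) := by
    have hl : T * (1-a) = 1 + a := by
      rw [hSval] at hTeq
      linear_combination (1+a) * hTeq + 2*T * hx2
    rw [eq_div_iff (by linarith : (1:ℝ) - a ≠ 0)]
    linarith [hl]
  -- formula for p
  have hpf : ∀ m : ℕ, p (m+1) = f m / (1+a) := by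
    intro m
    have hkm : 2*(m+1) - 1 = 2*m+1 := by omega
    rw [hp (m+1) (by omega), hkm, choose_eq_catalan, show (m+1) - 1 = m from rfl]
    simp only [hfdef, hxdef]
    have hA : (2*((m:ℝ)+1) - 1) ≠ 0 :=
      ne_of_gt (by have := Nat.cast_nonneg (α := ℝ) m; linarith)
    push_cast
    rw [div_pow, ← pow_mul]
    rw [show (1+a) ^ (2*m+1) = (1+a) ^ (2*m) * (1+a) from pow_succ (1+a) (2*m)]
    field_simp
    ring
  refine ⟨?_, ?_, ?_⟩
  · intro k hk
    obtain ⟨m, rfl⟩ := Nat.exists_eq_add_of_le hk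
    rw [Nat.add_comm 1 m, hpf m]
    exact div_nonneg (hfnonneg m) ha1'.le
  · have h1 : HasSum (fun m => f m / (1+a)) 1 := by
      have := (hSval ▸ hS : HasSum f (1+a)).div_const (1+a)
      rwa [div_self ha1'.ne'] at this
    have : (fun k : ℕ => p (k+1)) = fun m => f m / (1+a) := funext hpf
    rw [this]; exact h1
  · have hgT : HasSum g ((1+a)/(1-a)) := hTval ▸ hT
    have h1 : HasSum (fun m => g m / (1+a)) (1/(1-a)) := by
      have := hgT.div_const (1+a)
      have heq : (1+a)/(1-a)/(1+a) = 1/(1-a) := by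
        rw [div_div, mul_comm, ← div_div, div_self ha1'.ne']
      rwa [heq] at this
    have heq2 : (fun k : ℕ => ((k + 1 : ℕ) : ℝ) * p (k+1)) = fun m => g m / (1+a) := by
      funext m
      rw [hpf m]
      simp only [hfdef, hgdef]
      rw [← succ_mul_catalan_eq_centralBinom]
      push_cast
      ring
    rw [heq2]; exact h1
end

section
/- Let (X_n) be i.i.d. integer-valued with E[X_1] < 0, and S_n the induced walk. Let L be the strict ladder height measure, p = L((0,∞)), and ψ = Σ_{n=0}^∞ L^{n*}. Then p < 1 and for every Borel set A ⊆ [0,∞): P(sup_{n≥0} S_n ∈ A) = (1-p)·ψ(A). -/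
open MeasureTheory ProbabilityTheory
open scoped ENNReal

namespace Stmt18Aux




/-- partial sums of a sequence -/
def ps (y : ℕ → ℤ) (n : ℕ) : ℤ := ∑ i ∈ Finset.range n, y i

/-- `n` is a strict ascending ladder epoch of `y` -/
def LadV (n : ℕ) : Set (ℕ → ℤ) := {y | ∀ k < n, ps y k < ps y n}

open Classical in
/-- number of ladder epochs in `[1, n]` -/
noncomputable def cnt (y : ℕ → ℤ) (n : ℕ) : ℕ :=
  ((Finset.Icc 1 n).filter (fun j => y ∈ LadV j)).card

/-- `n` is a ladder epoch and there are exactly `k` ladder epochs in `[1,n]` -/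
def EkV (k n : ℕ) : Set (ℕ → ℤ) := {y | y ∈ LadV n ∧ cnt y n = k}

/-- first strict ladder epoch at time `r` -/
def ShV (r : ℕ) : Set (ℕ → ℤ) := {y | (∀ k < r, ps y k ≤ 0) ∧ 0 < ps y r}

/-- all partial sums up to `M` (exclusive) nonpositive -/
def GV (M : ℕ) : Set (ℕ → ℤ) := {y | ∀ k < M, ps y k ≤ 0}

/-- shift a sequence -/
def shf (n : ℕ) (y : ℕ → ℤ) : ℕ → ℤ := fun i => y (n + i)

lemma ps_zero (y : ℕ → ℤ) : ps y 0 = 0 := by simp [ps]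

lemma ps_shf (n : ℕ) (y : ℕ → ℤ) (k : ℕ) : ps (shf n y) k = ps y (n + k) - ps y n := by
  induction k with
  | zero => simp [ps]
  | succ k ih =>
      have h1 : ps (shf n y) (k + 1) = ps (shf n y) k + y (n + k) := by
        rw [ps, Finset.sum_range_succ, ← ps]; rfl
      have h2 : ps y (n + (k + 1)) = ps y (n + k) + y (n + k) := by
        rw [show n + (k + 1) = (n + k) + 1 by omega, ps, Finset.sum_range_succ, ← ps]
      rw [h1, ih, h2]; ring

lemma lad_zero (y : ℕ → ℤ) : y ∈ LadV 0 := by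
  intro k hk; exact absurd hk (Nat.not_lt_zero k)

lemma cnt_zero (y : ℕ → ℤ) : cnt y 0 = 0 := by simp [cnt]

lemma cnt_split {y : ℕ → ℤ} {n N : ℕ} (h1 : n < N) (hN : y ∈ LadV N)
    (h3 : ∀ j, n < j → j < N → y ∉ LadV j) : cnt y N = cnt y n + 1 := by
  classical
  have hfe : ((Finset.Icc 1 N).filter (fun j => y ∈ LadV j))
      = insert N ((Finset.Icc 1 n).filter (fun j => y ∈ LadV j)) := by
    ext j
    simp only [Finset.mem_filter, Finset.mem_insert, Finset.mem_Icc]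
    constructor
    · rintro ⟨⟨hj1, hjN⟩, hjL⟩
      rcases eq_or_lt_of_le hjN with rfl | hjN'
      · exact Or.inl rfl
      · refine Or.inr ⟨⟨hj1, ?_⟩, hjL⟩
        by_contra hcon
        exact h3 j (by omega) hjN' hjL
    · rintro (rfl | ⟨⟨hj1, hjn⟩, hjL⟩)
      · exact ⟨⟨by omega, le_rfl⟩, hN⟩
      · exact ⟨⟨hj1, by omega⟩, hjL⟩
  have hNnotmem : N ∉ (Finset.Icc 1 n).filter (fun j => y ∈ LadV j) := by
    simp only [Finset.mem_filter, Finset.mem_Icc]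
    rintro ⟨⟨_, h⟩, _⟩; omega
  rw [cnt, hfe, Finset.card_insert_of_notMem hNnotmem, cnt]

lemma decomp_mpr {y : ℕ → ℤ} {k n N : ℕ} (h1 : n < N) (h2 : y ∈ EkV k n)
    (h3 : shf n y ∈ ShV (N - n)) : y ∈ EkV (k + 1) N := by
  obtain ⟨hlad, hcnt⟩ := h2
  obtain ⟨hle, hpos⟩ := h3
  have hle' : ∀ j < N - n, ps y (n + j) ≤ ps y n := by
    intro j hj
    have := hle j hj
    rw [ps_shf] at this
    omega
  have hpos' : ps y n < ps y N := by
    rw [ps_shf] at hpos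
    have : n + (N - n) = N := by omega
    rw [this] at hpos; omega
  have hladN : y ∈ LadV N := by
    intro m hm
    rcases lt_trichotomy m n with hmn | rfl | hmn
    · exact lt_trans (hlad m hmn) hpos'
    · exact hpos'
    · have : ps y m ≤ ps y n := by
        have := hle' (m - n) (by omega)
        rwa [show n + (m - n) = m by omega] at this
      omega
  refine ⟨hladN, ?_⟩
  rw [cnt_split h1 hladN ?_, hcnt]
  intro j hnj hjN hL
  have h1' : ps y n < ps y j := hL n hnj
  have h2' : ps y j ≤ ps y n := by
    have := hle' (j - n) (by omega)
    rwa [show n + (j - n) = j by omega] at this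
  omega

lemma decomp_mp {y : ℕ → ℤ} {k N : ℕ} (h : y ∈ EkV (k + 1) N) :
    ∃ n, n < N ∧ y ∈ EkV k n ∧ shf n y ∈ ShV (N - n) := by
  classical
  obtain ⟨hladN, hcnt⟩ := h
  have hN : 0 < N := by
    rcases Nat.eq_zero_or_pos N with rfl | h
    · rw [cnt_zero] at hcnt; omega
    · exact h
  set s := (Finset.range N).filter (fun j => y ∈ LadV j) with hs
  have h0 : (0 : ℕ) ∈ s := by
    simp only [hs, Finset.mem_filter, Finset.mem_range]
    exact ⟨hN, lad_zero y⟩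
  have hsne : s.Nonempty := ⟨0, h0⟩
  set n := s.max' hsne with hn
  have hnmem : n ∈ s := s.max'_mem hsne
  have hnN : n < N := by
    have := hnmem; simp only [hs, Finset.mem_filter, Finset.mem_range] at this; exact this.1
  have hnlad : y ∈ LadV n := by
    have := hnmem; simp only [hs, Finset.mem_filter, Finset.mem_range] at this; exact this.2
  have hno : ∀ j, n < j → j < N → y ∉ LadV j := by
    intro j hj1 hj2 hL
    have : j ∈ s := by simp only [hs, Finset.mem_filter, Finset.mem_range]; exact ⟨hj2, hL⟩
    exact absurd (s.le_max' j this) (by omega)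
  have hpos : ps y n < ps y N := hladN n hnN
  have hle : ∀ j < N - n, ps y (n + j) ≤ ps y n := by
    by_contra hcon
    push_neg at hcon
    have hex : ∃ j, j < N - n ∧ ps y n < ps y (n + j) := by
      obtain ⟨j, hj1, hj2⟩ := hcon; exact ⟨j, hj1, hj2⟩
    obtain ⟨hj₀N, hj₀pos⟩ := Nat.find_spec hex
    have hj₀1 : 0 < Nat.find hex := by
      rcases Nat.eq_zero_or_pos (Nat.find hex) with hz | h
      · rw [hz] at hj₀pos; simp at hj₀pos
      · exact h
    have hladj : y ∈ LadV (n + Nat.find hex) := by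
      intro m hm
      rcases lt_trichotomy m n with hmn | rfl | hmn
      · exact lt_trans (hnlad m hmn) hj₀pos
      · exact hj₀pos
      · have hj' : m - n < Nat.find hex := by omega
        have := Nat.find_min hex hj'
        push_neg at this
        have hle2 : ps y (n + (m - n)) ≤ ps y n := this (by omega)
        rw [show n + (m - n) = m by omega] at hle2
        omega
    exact hno (n + Nat.find hex) (by omega) (by omega) hladj
  refine ⟨n, hnN, ⟨hnlad, ?_⟩, ?_, ?_⟩
  · have := cnt_split hnN hladN hno
    omega
  · intro j hj
    rw [ps_shf]; have := hle j hj; omega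
  · rw [ps_shf, show n + (N - n) = N by omega]; omega

lemma decomp_unique {y : ℕ → ℤ} {n n' N : ℕ} (h1 : n < n') (h1' : n' < N)
    (h3 : shf n y ∈ ShV (N - n)) (h4 : y ∈ LadV n') : False := by
  have hlt : ps y n < ps y n' := h4 n h1
  have := h3.1 (n' - n) (by omega)
  rw [ps_shf, show n + (n' - n) = n' by omega] at this
  omega

lemma ps_congr {y y' : ℕ → ℤ} {n : ℕ} (h : ∀ i < n, y i = y' i) {j : ℕ} (hj : j ≤ n) :
    ps y j = ps y' j :=
  Finset.sum_congr rfl fun i hi => h i (lt_of_lt_of_le (Finset.mem_range.1 hi) hj)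

lemma LadV_congr {y y' : ℕ → ℤ} {n : ℕ} (h : ∀ i < n, y i = y' i) :
    y ∈ LadV n ↔ y' ∈ LadV n := by
  unfold LadV
  constructor <;> intro hl k hk <;>
    [rw [← ps_congr h hk.le, ← ps_congr h le_rfl]; rw [ps_congr h hk.le, ps_congr h le_rfl]] <;>
    exact hl k hk

lemma cnt_congr {y y' : ℕ → ℤ} {n : ℕ} (h : ∀ i < n, y i = y' i) : cnt y n = cnt y' n := by
  classical
  unfold cnt
  congr 1
  apply Finset.filter_congr
  intro j hj
  simp only [Finset.mem_Icc] at hj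
  have : ∀ i < j, y i = y' i := fun i hi => h i (by omega)
  simp [LadV_congr this]

lemma EkV_congr {y y' : ℕ → ℤ} {k n : ℕ} (h : ∀ i < n, y i = y' i) :
    y ∈ EkV k n ↔ y' ∈ EkV k n := by
  unfold EkV
  rw [Set.mem_setOf_eq, Set.mem_setOf_eq, LadV_congr h, cnt_congr h]

lemma ShV_congr {y y' : ℕ → ℤ} {r : ℕ} (h : ∀ i < r, y i = y' i) :
    y ∈ ShV r ↔ y' ∈ ShV r := by
  unfold ShV
  simp only [Set.mem_setOf_eq]
  constructor <;> intro ⟨ha, hb⟩ <;> refine ⟨fun k hk => ?_, ?_⟩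
  · rw [← ps_congr h hk.le]; exact ha k hk
  · rw [← ps_congr h le_rfl]; exact hb
  · rw [ps_congr h hk.le]; exact ha k hk
  · rw [ps_congr h le_rfl]; exact hb

lemma GV_congr {y y' : ℕ → ℤ} {M : ℕ} (h : ∀ i < M, y i = y' i) :
    y ∈ GV M ↔ y' ∈ GV M := by
  unfold GV
  simp only [Set.mem_setOf_eq]
  constructor <;> intro ha k hk
  · rw [← ps_congr h hk.le]; exact ha k hk
  · rw [ps_congr h hk.le]; exact ha k hk

lemma EkV_zero_zero : EkV 0 0 = Set.univ := by
  ext y; simp [EkV, lad_zero, cnt_zero]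

lemma EkV_succ_zero (k : ℕ) : EkV (k + 1) 0 = ∅ := by
  ext y; simp [EkV, cnt_zero]

lemma EkV_zero_succ (n : ℕ) : EkV 0 (n + 1) = ∅ := by
  classical
  ext y
  simp only [EkV, Set.mem_setOf_eq, Set.mem_empty_iff_false, iff_false, not_and]
  intro hlad
  have : (n + 1) ∈ (Finset.Icc 1 (n + 1)).filter (fun j => y ∈ LadV j) := by
    simp only [Finset.mem_filter, Finset.mem_Icc]
    exact ⟨⟨by omega, le_rfl⟩, hlad⟩
  have : 0 < cnt y (n + 1) := Finset.card_pos.2 ⟨n + 1, this⟩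
  omega

-- measurability
lemma meas_ps (n : ℕ) : Measurable fun y : ℕ → ℤ => ps y n :=
  Finset.measurable_sum _ fun i _ => measurable_pi_apply i

lemma measSet_of_pair {f g : (ℕ → ℤ) → ℤ} (hf : Measurable f) (hg : Measurable g)
    (P : ℤ → ℤ → Prop) : MeasurableSet {y | P (f y) (g y)} := by
  have : {y | P (f y) (g y)} = (fun y => (f y, g y)) ⁻¹' {p : ℤ × ℤ | P p.1 p.2} := rfl
  rw [this]
  exact (hf.prodMk hg) ((Set.to_countable _).measurableSet)

lemma meas_LadV (n : ℕ) : MeasurableSet (LadV n) := by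
  have : LadV n = ⋂ k, ⋂ _ : k < n, {y | ps y k < ps y n} := by
    ext y; simp [LadV]
  rw [this]
  exact MeasurableSet.iInter fun k => MeasurableSet.iInter fun _ =>
    measSet_of_pair (meas_ps k) (meas_ps n) (· < ·)

lemma meas_cnt (n : ℕ) : Measurable fun y => cnt y n := by
  classical
  have : (fun y => cnt y n) = fun y => ∑ j ∈ Finset.Icc 1 n, if y ∈ LadV j then 1 else 0 := by
    funext y
    rw [cnt, Finset.card_filter]
  rw [this]
  exact Finset.measurable_sum _ fun j _ => Measurable.ite (meas_LadV j) measurable_const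
    measurable_const

lemma meas_EkV (k n : ℕ) : MeasurableSet (EkV k n) := by
  have : EkV k n = LadV n ∩ (fun y => cnt y n) ⁻¹' {k} := rfl
  rw [this]
  exact (meas_LadV n).inter ((meas_cnt n) (MeasurableSet.singleton k))

lemma meas_ShV (r : ℕ) : MeasurableSet (ShV r) := by
  have : ShV r = (⋂ k, ⋂ _ : k < r, {y | ps y k ≤ 0}) ∩ {y | 0 < ps y r} := by
    ext y; simp [ShV]
  rw [this]
  exact MeasurableSet.inter
    (MeasurableSet.iInter fun k => MeasurableSet.iInter fun _ =>
      measSet_of_pair (meas_ps k) (meas_ps k) (fun a _ => a ≤ 0))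
    (measSet_of_pair (meas_ps r) (meas_ps r) (fun a _ => 0 < a))

lemma meas_GV (M : ℕ) : MeasurableSet (GV M) := by
  have : GV M = ⋂ k, ⋂ _ : k < M, {y | ps y k ≤ 0} := by
    ext y; simp [GV]
  rw [this]
  exact MeasurableSet.iInter fun k => MeasurableSet.iInter fun _ =>
    measSet_of_pair (meas_ps k) (meas_ps k) (fun a _ => a ≤ 0)

variable {Ω : Type*} [MeasurableSpace Ω] {μ : Measure Ω} [IsProbabilityMeasure μ]
  {X : ℕ → Ω → ℤ}

/-- block of length `m` starting at index `n`, padded with zeros -/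
def blk (X : ℕ → Ω → ℤ) (n m : ℕ) (ω : Ω) : ℕ → ℤ := fun i => if i < m then X (n + i) ω else 0

lemma meas_blk (hmeas : ∀ n, Measurable (X n)) (n m : ℕ) : Measurable (blk X n m) := by
  apply measurable_pi_lambda
  intro i
  by_cases h : i < m
  · simpa [blk, h] using hmeas (n + i)
  · simpa [blk, h] using measurable_const

/-- law of a finite block of an iid sequence is the iid product law -/
lemma iid_pi (hmeas : ∀ n, Measurable (X n))
    (hindep : iIndepFun X μ)
    (hident : ∀ n, Measure.map (X n) μ = Measure.map (X 0) μ) (n m : ℕ) :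
    Measure.map (fun ω (i : Fin m) => X (n + (i : ℕ)) ω) μ
      = Measure.pi (fun _ : Fin m => Measure.map (X 0) μ) := by
  have hmv : Measurable (fun ω (i : Fin m) => X (n + (i : ℕ)) ω) :=
    measurable_pi_lambda _ fun i => hmeas _
  refine (Measure.pi_eq fun s hs => ?_).symm
  classical
  set sets : ℕ → Set ℤ := fun i => if h : n ≤ i ∧ i < n + m then s ⟨i - n, by omega⟩ else Set.univ
    with hsets
  have hsets_meas : ∀ i, MeasurableSet (sets i) := fun i => MeasurableSet.of_discrete
  have hpre : (fun ω (i : Fin m) => X (n + (i : ℕ)) ω) ⁻¹' (Set.univ.pi s)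
      = ⋂ i ∈ Finset.image (fun j => n + j) (Finset.range m), X i ⁻¹' sets i := by
    ext ω
    simp only [Set.mem_preimage, Set.mem_pi, Set.mem_univ, forall_true_left, Set.mem_iInter,
      Finset.mem_image, Finset.mem_range]
    constructor
    · rintro h i ⟨j, hj, rfl⟩
      have : sets (n + j) = s ⟨j, hj⟩ := by
        simp only [hsets]
        rw [dif_pos ⟨by omega, by omega⟩]
        simp only [Nat.add_sub_cancel_left, Fin.eta]
      rw [this]
      exact h ⟨j, hj⟩
    · intro h i
      have := h (n + (i : ℕ)) ⟨i, i.2, rfl⟩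
      have heq : sets (n + (i : ℕ)) = s i := by
        simp only [hsets]
        rw [dif_pos ⟨by omega, by omega⟩]
        simp only [Nat.add_sub_cancel_left, Fin.eta]
      rwa [heq] at this
  rw [Measure.map_apply hmv (MeasurableSet.univ_pi fun i => MeasurableSet.of_discrete), hpre,
    hindep.measure_inter_preimage_eq_mul _ (fun i _ => hsets_meas i)]
  rw [Finset.prod_image (by intro a _ b _ h; dsimp only at h; omega)]
  rw [← Fin.prod_univ_eq_prod_range (fun j => μ (X (n + j) ⁻¹' sets (n + j))) m]
  apply Finset.prod_congr rfl
  intro i _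
  have heq : sets (n + (i : ℕ)) = s i := by
    simp only [hsets]
    rw [dif_pos ⟨by omega, by omega⟩]
    simp only [Nat.add_sub_cancel_left, Fin.eta]
  rw [heq, ← Measure.map_apply (hmeas _) MeasurableSet.of_discrete, hident]

/-- padding map -/
def padm (m : ℕ) (v : Fin m → ℤ) : ℕ → ℤ := fun i => if h : i < m then v ⟨i, h⟩ else 0

lemma meas_padm (m : ℕ) : Measurable (padm m) := by
  apply measurable_pi_lambda
  intro i
  by_cases h : i < m
  · simpa [padm, h] using measurable_pi_apply (⟨i, h⟩ : Fin m)
  · simpa [padm, h] using measurable_const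

lemma blk_eq_padm (n m : ℕ) : blk X n m = padm m ∘ fun ω (i : Fin m) => X (n + (i : ℕ)) ω := by
  funext ω i
  by_cases h : i < m <;> simp [blk, padm, h]

/-- stationarity of the block law -/
lemma blk_law (hmeas : ∀ n, Measurable (X n))
    (hindep : iIndepFun X μ)
    (hident : ∀ n, Measure.map (X n) μ = Measure.map (X 0) μ) (n m : ℕ) :
    Measure.map (blk X n m) μ = Measure.map (blk X 0 m) μ := by
  rw [blk_eq_padm n m, blk_eq_padm 0 m,
    ← Measure.map_map (meas_padm m) (measurable_pi_lambda _ fun i => hmeas _),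
    ← Measure.map_map (meas_padm m) (measurable_pi_lambda _ fun i => hmeas _),
    iid_pi hmeas hindep hident n m, iid_pi hmeas hindep hident 0 m]

/-- independence of disjoint blocks -/
lemma blk_indep (hmeas : ∀ n, Measurable (X n))
    (hindep : iIndepFun X μ) (n m : ℕ) :
    IndepFun (blk X 0 n) (blk X n m) μ := by
  classical
  have hdisj : Disjoint (Finset.range n) (Finset.Ico n (n + m)) := by
    rw [Finset.disjoint_left]
    intro a ha ha'
    simp only [Finset.mem_range] at ha
    simp only [Finset.mem_Ico] at ha'
    omega
  have hbase := hindep.indepFun_finset (Finset.range n) (Finset.Ico n (n + m)) hdisj hmeas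
  set g₁ : (↥(Finset.range n) → ℤ) → (ℕ → ℤ) :=
    fun v i => if h : i < n then v ⟨i, Finset.mem_range.2 h⟩ else 0 with hg₁
  set g₂ : (↥(Finset.Ico n (n + m)) → ℤ) → (ℕ → ℤ) :=
    fun v i => if h : i < m then v ⟨n + i, Finset.mem_Ico.2 ⟨by omega, by omega⟩⟩ else 0 with hg₂
  have hmg₁ : Measurable g₁ := by
    apply measurable_pi_lambda
    intro i
    by_cases h : i < n
    · simpa [hg₁, h] using measurable_pi_apply _
    · simpa [hg₁, h] using measurable_const
  have hmg₂ : Measurable g₂ := by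
    apply measurable_pi_lambda
    intro i
    by_cases h : i < m
    · simpa [hg₂, h] using measurable_pi_apply _
    · simpa [hg₂, h] using measurable_const
  have he₁ : blk X 0 n = g₁ ∘ (fun a (i : ↥(Finset.range n)) => X (i : ℕ) a) := by
    funext ω i
    by_cases h : i < n <;> simp [blk, hg₁, h, Function.comp]
  have he₂ : blk X n m = g₂ ∘ (fun a (i : ↥(Finset.Ico n (n + m))) => X (i : ℕ) a) := by
    funext ω i
    by_cases h : i < m <;> simp [blk, hg₂, h, Function.comp]
  rw [he₁, he₂]
  exact hbase.comp hmg₁ hmg₂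

/-- joint law of two disjoint blocks is the product of (stationary) block laws -/
lemma blk_joint (hmeas : ∀ n, Measurable (X n))
    (hindep : iIndepFun X μ)
    (hident : ∀ n, Measure.map (X n) μ = Measure.map (X 0) μ) (n m : ℕ) :
    Measure.map (fun ω => (blk X 0 n ω, blk X n m ω)) μ
      = (Measure.map (blk X 0 n) μ).prod (Measure.map (blk X 0 m) μ) := by
  rw [← blk_law hmeas hindep hident n m]
  exact (indepFun_iff_map_prod_eq_prod_map_map (meas_blk hmeas 0 n).aemeasurable
    (meas_blk hmeas n m).aemeasurable).1 (blk_indep hmeas hindep n m)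

/-- the master convolution identity for block functionals -/
lemma key_conv (hmeas : ∀ n, Measurable (X n))
    (hindep : iIndepFun X μ)
    (hident : ∀ n, Measure.map (X n) μ = Measure.map (X 0) μ) (n m : ℕ)
    (B₁ B₂ : Set (ℕ → ℤ)) (hB₁ : MeasurableSet B₁) (hB₂ : MeasurableSet B₂) :
    Measure.map (fun ω => ps (blk X 0 n ω) n + ps (blk X n m ω) m)
        (μ.restrict (blk X 0 n ⁻¹' B₁ ∩ blk X n m ⁻¹' B₂))
      = (Measure.map (fun ω => ps (blk X 0 n ω) n) (μ.restrict (blk X 0 n ⁻¹' B₁))).conv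
        (Measure.map (fun ω => ps (blk X 0 m ω) m) (μ.restrict (blk X 0 m ⁻¹' B₂))) := by
  have hpair : Measurable (fun ω => (blk X 0 n ω, blk X n m ω)) :=
    (meas_blk hmeas 0 n).prodMk (meas_blk hmeas n m)
  have hF : Measurable (fun q : (ℕ → ℤ) × (ℕ → ℤ) => ps q.1 n + ps q.2 m) :=
    ((meas_ps n).comp measurable_fst).add ((meas_ps m).comp measurable_snd)
  have hpre : blk X 0 n ⁻¹' B₁ ∩ blk X n m ⁻¹' B₂
      = (fun ω => (blk X 0 n ω, blk X n m ω)) ⁻¹' (B₁ ×ˢ B₂) := by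
    ext ω; simp [Set.mem_prod]
  -- left side
  have lhs_eq : Measure.map (fun ω => ps (blk X 0 n ω) n + ps (blk X n m ω) m)
      (μ.restrict (blk X 0 n ⁻¹' B₁ ∩ blk X n m ⁻¹' B₂))
      = Measure.map (fun q : (ℕ → ℤ) × (ℕ → ℤ) => ps q.1 n + ps q.2 m)
        (((Measure.map (blk X 0 n) μ).prod (Measure.map (blk X 0 m) μ)).restrict (B₁ ×ˢ B₂)) := by
    rw [← blk_joint hmeas hindep hident n m,
      Measure.restrict_map hpair (hB₁.prod hB₂), Measure.map_map hF hpair, hpre]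
    rfl
  rw [lhs_eq, ← Measure.prod_restrict, Measure.conv]
  have h1 : Measure.map (fun ω => ps (blk X 0 n ω) n) (μ.restrict (blk X 0 n ⁻¹' B₁))
      = Measure.map (fun y => ps y n) ((Measure.map (blk X 0 n) μ).restrict B₁) := by
    rw [Measure.restrict_map (meas_blk hmeas 0 n) hB₁,
      Measure.map_map (meas_ps n) (meas_blk hmeas 0 n)]
    rfl
  have h2 : Measure.map (fun ω => ps (blk X 0 m ω) m) (μ.restrict (blk X 0 m ⁻¹' B₂))
      = Measure.map (fun y => ps y m) ((Measure.map (blk X 0 m) μ).restrict B₂) := by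
    rw [Measure.restrict_map (meas_blk hmeas 0 m) hB₂,
      Measure.map_map (meas_ps m) (meas_blk hmeas 0 m)]
    rfl
  rw [h1, h2, Measure.map_prod_map _ _ (meas_ps n) (meas_ps m),
    Measure.map_map (measurable_add (M := ℤ)) ((meas_ps n).prodMap (meas_ps m))]
  rfl

/-- multiplicativity for block events -/
lemma key_mul (hmeas : ∀ n, Measurable (X n))
    (hindep : iIndepFun X μ)
    (hident : ∀ n, Measure.map (X n) μ = Measure.map (X 0) μ) (n m : ℕ)
    (B₁ B₂ : Set (ℕ → ℤ)) (hB₁ : MeasurableSet B₁) (hB₂ : MeasurableSet B₂) :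
    μ (blk X 0 n ⁻¹' B₁ ∩ blk X n m ⁻¹' B₂)
      = μ (blk X 0 n ⁻¹' B₁) * μ (blk X 0 m ⁻¹' B₂) := by
  have hpair : Measurable (fun ω => (blk X 0 n ω, blk X n m ω)) :=
    (meas_blk hmeas 0 n).prodMk (meas_blk hmeas n m)
  have hpre : blk X 0 n ⁻¹' B₁ ∩ blk X n m ⁻¹' B₂
      = (fun ω => (blk X 0 n ω, blk X n m ω)) ⁻¹' (B₁ ×ˢ B₂) := by
    ext ω; simp [Set.mem_prod]
  rw [hpre, ← Measure.map_apply hpair (hB₁.prod hB₂), blk_joint hmeas hindep hident n m,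
    Measure.prod_prod, Measure.map_apply (meas_blk hmeas 0 n) hB₁,
    Measure.map_apply (meas_blk hmeas 0 m) hB₂]

-- Ω-level events
variable (X) in
/-- `n` is a ladder epoch with exactly `k` ladder epochs in `[1,n]` -/
def EkE (k n : ℕ) : Set Ω := blk X 0 n ⁻¹' EkV k n

variable (X) in
/-- first ladder epoch of the shifted walk at `n + r` -/
def ShE (n r : ℕ) : Set Ω := blk X n r ⁻¹' ShV r

variable (X) in
def GfE (n M : ℕ) : Set Ω := blk X n M ⁻¹' GV M

variable (X) in
def GE (n : ℕ) : Set Ω := ⋂ M, GfE X n M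

variable (X) in
def LadE (n : ℕ) : Set Ω := blk X 0 n ⁻¹' LadV n

lemma meas_EkE (hmeas : ∀ n, Measurable (X n)) (k n : ℕ) : MeasurableSet (EkE X k n) :=
  (meas_blk hmeas 0 n) (meas_EkV k n)

lemma meas_ShE (hmeas : ∀ n, Measurable (X n)) (n r : ℕ) : MeasurableSet (ShE X n r) :=
  (meas_blk hmeas n r) (meas_ShV r)

lemma meas_GfE (hmeas : ∀ n, Measurable (X n)) (n M : ℕ) : MeasurableSet (GfE X n M) :=
  (meas_blk hmeas n M) (meas_GV M)

lemma meas_GE (hmeas : ∀ n, Measurable (X n)) (n : ℕ) : MeasurableSet (GE X n) :=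
  MeasurableSet.iInter fun M => meas_GfE hmeas n M

lemma meas_LadE (hmeas : ∀ n, Measurable (X n)) (n : ℕ) : MeasurableSet (LadE X n) :=
  (meas_blk hmeas 0 n) (meas_LadV n)

lemma blk_agree (n m : ℕ) (ω : Ω) : ∀ i < m, blk X n m ω i = shf n (fun j => X j ω) i :=
  fun i hi => by simp [blk, shf, hi]

lemma blk_agree0 (m : ℕ) (ω : Ω) : ∀ i < m, blk X 0 m ω i = (fun j => X j ω) i :=
  fun i hi => by simp [blk, hi]

lemma mem_EkE {ω : Ω} {k n : ℕ} : ω ∈ EkE X k n ↔ (fun j => X j ω) ∈ EkV k n :=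
  EkV_congr (blk_agree0 n ω)

lemma mem_LadE {ω : Ω} {n : ℕ} : ω ∈ LadE X n ↔ (fun j => X j ω) ∈ LadV n :=
  LadV_congr (blk_agree0 n ω)

lemma mem_ShE {ω : Ω} {n r : ℕ} : ω ∈ ShE X n r ↔ shf n (fun j => X j ω) ∈ ShV r :=
  ShV_congr (blk_agree n r ω)

lemma mem_GfE {ω : Ω} {n M : ℕ} : ω ∈ GfE X n M ↔ shf n (fun j => X j ω) ∈ GV M :=
  GV_congr (blk_agree n M ω)

/-- decomposition of the `k+1` ladder-epoch event according to the `k`-th ladder epoch -/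
lemma EkE_decomp (k N : ℕ) :
    EkE X (k + 1) N = ⋃ n ∈ Finset.range N, (EkE X k n ∩ ShE X n (N - n)) := by
  ext ω
  simp only [Set.mem_iUnion, Finset.mem_range, Set.mem_inter_iff, mem_EkE, mem_ShE]
  constructor
  · intro h
    obtain ⟨n, hn, h1, h2⟩ := decomp_mp h
    exact ⟨n, hn, h1, h2⟩
  · rintro ⟨n, hn, h1, h2⟩
    exact decomp_mpr hn h1 h2

lemma EkE_disj (k N : ℕ) : ∀ n ∈ Finset.range N, ∀ n' ∈ Finset.range N, n ≠ n' →
    Disjoint (EkE X k n ∩ ShE X n (N - n)) (EkE X k n' ∩ ShE X n' (N - n')) := by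
  intro n hn n' hn' hne
  simp only [Finset.mem_range] at hn hn'
  rw [Set.disjoint_left]
  rintro ω ⟨h1, h2⟩ ⟨h1', h2'⟩
  rw [mem_EkE] at h1 h1'
  rw [mem_ShE] at h2 h2'
  rcases Nat.lt_or_ge n n' with hlt | hge
  · exact decomp_unique hlt hn' h2 h1'.1
  · have hlt' : n' < n := by omega
    exact decomp_unique hlt' hn h2' h1.1
/-- partial-sum functional -/
def psf (X : ℕ → Ω → ℤ) (n : ℕ) (ω : Ω) : ℤ := ps (blk X 0 n ω) n

lemma meas_psf (hmeas : ∀ n, Measurable (X n)) (n : ℕ) : Measurable (psf X n) :=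
  (meas_ps n).comp (meas_blk hmeas 0 n)

lemma psf_split (n r : ℕ) (ω : Ω) :
    psf X (n + r) ω = psf X n ω + ps (blk X n r ω) r := by
  have h1 : psf X (n + r) ω = ps (fun j => X j ω) (n + r) := by
    unfold psf
    exact ps_congr (blk_agree0 (n + r) ω) le_rfl
  have h2 : psf X n ω = ps (fun j => X j ω) n := by
    unfold psf
    exact ps_congr (blk_agree0 n ω) le_rfl
  have h3 : ps (blk X n r ω) r = ps (shf n (fun j => X j ω)) r :=
    ps_congr (blk_agree n r ω) le_rfl
  rw [h1, h2, h3, ps_shf]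
  ring

/-- the key convolution step: the measure of `k+1`-ladder paths is the convolution of the
measure of `k`-ladder paths with the ladder height measure. -/
lemma step (hmeas : ∀ n, Measurable (X n))
    (hindep : iIndepFun X μ)
    (hident : ∀ n, Measure.map (X n) μ = Measure.map (X 0) μ) (k : ℕ) :
    Measure.sum (fun N => Measure.map (psf X N) (μ.restrict (EkE X (k + 1) N)))
      = (Measure.sum (fun n => Measure.map (psf X n) (μ.restrict (EkE X k n)))).conv
        (Measure.sum (fun r => Measure.map (psf X (r + 1)) (μ.restrict (ShE X 0 (r + 1))))) := by
  classical
  -- rewrite the convolution of sums as a sum over pairs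
  have hconv : (Measure.sum (fun n => Measure.map (psf X n) (μ.restrict (EkE X k n)))).conv
        (Measure.sum (fun r => Measure.map (psf X (r + 1)) (μ.restrict (ShE X 0 (r + 1)))))
      = Measure.sum (fun p : ℕ × ℕ =>
          (Measure.map (psf X p.1) (μ.restrict (EkE X k p.1))).conv
          (Measure.map (psf X (p.2 + 1)) (μ.restrict (ShE X 0 (p.2 + 1))))) := by
    rw [Measure.conv, Measure.prod_sum,
      Measure.map_sum (measurable_add (M := ℤ)).aemeasurable]
    rfl
  rw [hconv]
  -- identify each pair convolution via the master lemma
  have hpair : ∀ n r : ℕ,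
      (Measure.map (psf X n) (μ.restrict (EkE X k n))).conv
        (Measure.map (psf X (r + 1)) (μ.restrict (ShE X 0 (r + 1))))
      = Measure.map (psf X (n + r + 1)) (μ.restrict (EkE X k n ∩ ShE X n (r + 1))) := by
    intro n r
    have hkc := key_conv (μ := μ) hmeas hindep hident n (r + 1) (EkV k n) (ShV (r + 1))
      (meas_EkV k n) (meas_ShV (r + 1))
    have hfun : (fun ω => ps (blk X 0 n ω) n + ps (blk X n (r + 1) ω) (r + 1))
        = psf X (n + r + 1) := by
      funext ω
      rw [show n + r + 1 = n + (r + 1) by omega, psf_split]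
      rfl
    show (Measure.map (fun ω => ps (blk X 0 n ω) n)
          (μ.restrict (blk X 0 n ⁻¹' EkV k n))).conv
        (Measure.map (fun ω => ps (blk X 0 (r + 1) ω) (r + 1))
          (μ.restrict (blk X 0 (r + 1) ⁻¹' ShV (r + 1)))) = _
    rw [← hkc, hfun]
    rfl
  have hrw : (fun p : ℕ × ℕ =>
      (Measure.map (psf X p.1) (μ.restrict (EkE X k p.1))).conv
        (Measure.map (psf X (p.2 + 1)) (μ.restrict (ShE X 0 (p.2 + 1)))))
      = fun p : ℕ × ℕ =>
        Measure.map (psf X (p.1 + p.2 + 1)) (μ.restrict (EkE X k p.1 ∩ ShE X p.1 (p.2 + 1))) := by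
    funext p
    exact hpair p.1 p.2
  rw [hrw]
  -- now compare both sums applied to an arbitrary measurable set
  ext A hA
  rw [Measure.sum_apply _ hA, Measure.sum_apply _ hA]
  have happly : ∀ (n₀ : ℕ) (E : Set Ω), MeasurableSet E →
      Measure.map (psf X n₀) (μ.restrict E) A = μ (psf X n₀ ⁻¹' A ∩ E) := by
    intro n₀ E hE
    rw [Measure.map_apply (meas_psf hmeas n₀) hA, Measure.restrict_apply
      ((meas_psf hmeas n₀) hA)]
  -- b' p
  set b : ℕ × ℕ → ℝ≥0∞ := fun p =>
    μ (psf X (p.1 + p.2 + 1) ⁻¹' A ∩ (EkE X k p.1 ∩ ShE X p.1 (p.2 + 1))) with hb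
  have hL : ∀ N, Measure.map (psf X N) (μ.restrict (EkE X (k + 1) N)) A
      = ∑ n ∈ Finset.range N, b (n, N - n - 1) := by
    intro N
    rw [happly N _ (meas_EkE hmeas (k + 1) N)]
    have hsplit : psf X N ⁻¹' A ∩ EkE X (k + 1) N
        = ⋃ n ∈ Finset.range N, (psf X N ⁻¹' A ∩ (EkE X k n ∩ ShE X n (N - n))) := by
      rw [EkE_decomp]
      ext ω
      simp only [Set.mem_inter_iff, Set.mem_iUnion, Finset.mem_range]
      tauto
    rw [hsplit, measure_biUnion_finset ?_ ?_]
    · apply Finset.sum_congr rfl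
      intro n hn
      simp only [Finset.mem_range] at hn
      simp only [hb]
      rw [show n + (N - n - 1) + 1 = N by omega, show N - n - 1 + 1 = N - n by omega]
    · intro n hn n' hn' hne
      exact Set.disjoint_left.2 fun ω ⟨_, h2⟩ ⟨_, h2'⟩ =>
        Set.disjoint_left.1 (EkE_disj k N n hn n' hn' hne) h2 h2'
    · intro n _
      exact ((meas_psf hmeas N) hA).inter ((meas_EkE hmeas k n).inter (meas_ShE hmeas n (N - n)))
  have hR : ∀ p : ℕ × ℕ,
      Measure.map (psf X (p.1 + p.2 + 1)) (μ.restrict (EkE X k p.1 ∩ ShE X p.1 (p.2 + 1))) A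
      = b p := by
    intro p
    rw [happly _ _ ((meas_EkE hmeas k p.1).inter (meas_ShE hmeas p.1 (p.2 + 1)))]
  simp only [hL, hR]
  -- regroup the double sum
  have h1 : ∀ N, ∑ n ∈ Finset.range N, b (n, N - n - 1)
      = ∑' n : ℕ, if n < N then b (n, N - n - 1) else 0 := by
    intro N
    rw [tsum_eq_sum (s := Finset.range N) ?_]
    · apply Finset.sum_congr rfl
      intro n hn
      simp only [Finset.mem_range] at hn
      rw [if_pos hn]
    · intro n hn
      simp only [Finset.mem_range, not_lt] at hn
      rw [if_neg (by omega)]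
  simp only [h1]
  rw [ENNReal.tsum_comm]
  rw [ENNReal.tsum_prod']
  congr 1
  funext n
  have hinj : Function.Injective (fun r : ℕ => n + r + 1) := fun a b h => by
    dsimp only at h; omega
  rw [← Function.Injective.tsum_eq hinj (f := fun N => if n < N then b (n, N - n - 1) else 0) ?_]
  · congr 1
    funext r
    have : n < n + r + 1 := by omega
    rw [if_pos this, show n + r + 1 - n - 1 = r by omega]
  · intro N hN
    simp only [Function.mem_support, ne_eq] at hN
    by_cases h : n < N
    · exact ⟨N - n - 1, by dsimp only; omega⟩
    · rw [if_neg h] at hN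
      exact absurd rfl hN
lemma shf_zero (y : ℕ → ℤ) : shf 0 y = y := funext fun i => congrArg y (Nat.zero_add i)

lemma GV_antitone : Antitone (GV) := fun M M' h y hy k hk => hy k (lt_of_lt_of_le hk h)

lemma GfE_antitone (n : ℕ) : Antitone (GfE X n) := by
  intro M M' h ω hω
  rw [mem_GfE] at hω ⊢
  exact GV_antitone h hω

/-- multiplication rule against the all-time event `GE` -/
lemma G_mul (hmeas : ∀ n, Measurable (X n))
    (hindep : iIndepFun X μ)
    (hident : ∀ n, Measure.map (X n) μ = Measure.map (X 0) μ)
    (n : ℕ) (B₁ : Set (ℕ → ℤ)) (hB₁ : MeasurableSet B₁) :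
    μ (blk X 0 n ⁻¹' B₁ ∩ GE X n) = μ (blk X 0 n ⁻¹' B₁) * μ (GE X 0) := by
  have hfin : ∀ M, μ (blk X 0 n ⁻¹' B₁ ∩ GfE X n M) = μ (blk X 0 n ⁻¹' B₁) * μ (GfE X 0 M) :=
    fun M => key_mul hmeas hindep hident n M B₁ (GV M) hB₁ (meas_GV M)
  have hiE : blk X 0 n ⁻¹' B₁ ∩ GE X n = ⋂ M, (blk X 0 n ⁻¹' B₁ ∩ GfE X n M) := by
    rw [GE, Set.inter_iInter]
  have hanti : Antitone (fun M => blk X 0 n ⁻¹' B₁ ∩ GfE X n M) :=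
    fun M M' h => Set.inter_subset_inter_right _ (GfE_antitone n h)
  have h1 : μ (blk X 0 n ⁻¹' B₁ ∩ GE X n) = ⨅ M, μ (blk X 0 n ⁻¹' B₁ ∩ GfE X n M) := by
    rw [hiE]
    exact Directed.measure_iInter
      (fun M => ((meas_blk hmeas 0 n hB₁).inter (meas_GfE hmeas n M)).nullMeasurableSet)
      (hanti.directed_ge) ⟨0, measure_ne_top μ _⟩
  have h2 : μ (GE X 0) = ⨅ M, μ (GfE X 0 M) :=
    Directed.measure_iInter
      (fun M => (meas_GfE hmeas 0 M).nullMeasurableSet)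
      ((GfE_antitone 0).directed_ge) ⟨0, measure_ne_top μ _⟩
  rw [h1, h2]
  simp only [hfin]
  exact (ENNReal.mul_iInf' (fun h => absurd h (measure_ne_top μ _))
    (fun _ => inferInstance)).symm

/-- a.e. there is a (first) argmax of the walk -/
lemma argmax_ae (hmeas : ∀ n, Measurable (X n))
    (hindep : iIndepFun X μ)
    (hident : ∀ n, Measure.map (X n) μ = Measure.map (X 0) μ)
    (hint : Integrable (fun ω => (X 0 ω : ℝ)) μ)
    (hdrift : ∫ ω, (X 0 ω : ℝ) ∂μ < 0)
    (S : ℕ → Ω → ℤ) (hS : ∀ n ω, S n ω = ∑ i ∈ Finset.range n, X i ω) :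
    ∀ᵐ ω ∂μ, ∃ n, (∀ k < n, S k ω < S n ω) ∧ ∀ j, S (n + j) ω ≤ S n ω := by
  classical
  have hpairwise : Pairwise (Function.onFun (IndepFun · · μ) fun i ω => (X i ω : ℝ)) := by
    intro i j hij
    exact (hindep.indepFun hij).comp
      (Measurable.of_discrete (f := fun z : ℤ => (z : ℝ)))
      (Measurable.of_discrete (f := fun z : ℤ => (z : ℝ)))
  have hid : ∀ i, IdentDistrib (fun ω => (X i ω : ℝ)) (fun ω => (X 0 ω : ℝ)) μ μ := by
    intro i
    exact IdentDistrib.comp ⟨(hmeas i).aemeasurable, (hmeas 0).aemeasurable, hident i⟩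
      (Measurable.of_discrete (f := fun z : ℤ => (z : ℝ)))
  have hsl := strong_law_ae_real (fun i ω => (X i ω : ℝ)) hint hpairwise hid
  filter_upwards [hsl] with ω hω
  have hev : ∀ᶠ n : ℕ in Filter.atTop,
      (∑ i ∈ Finset.range n, (X i ω : ℝ)) / (n : ℝ) < 0 :=
    hω.eventually_lt_const hdrift
  obtain ⟨N, hN⟩ := Filter.eventually_atTop.1 (hev.and (Filter.eventually_ge_atTop 1))
  have hneg : ∀ n ≥ N, S n ω < 0 := by
    intro n hn
    obtain ⟨h1, h2⟩ := hN n hn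
    have hnum : (∑ i ∈ Finset.range n, (X i ω : ℝ)) < 0 := by
      by_contra hc
      push_neg at hc
      have : (0 : ℝ) ≤ (∑ i ∈ Finset.range n, (X i ω : ℝ)) / (n : ℝ) :=
        div_nonneg hc (by positivity)
      linarith
    have : ((S n ω : ℤ) : ℝ) < 0 := by
      rw [hS n ω]
      push_cast
      exact hnum
    exact_mod_cast this
  have hS0 : S 0 ω = 0 := by rw [hS 0 ω]; simp
  obtain ⟨n₀, hn₀mem, hmax⟩ := (Finset.range (N + 1)).exists_max_image (fun k => S k ω)
    ⟨0, Finset.mem_range.2 (by omega)⟩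
  have hglob : ∀ k, S k ω ≤ S n₀ ω := by
    intro k
    by_cases hk : k < N + 1
    · exact hmax k (Finset.mem_range.2 hk)
    · have h1 : S k ω < 0 := hneg k (by omega)
      have h2 : (0 : ℤ) ≤ S n₀ ω := by
        rw [← hS0]; exact hmax 0 (Finset.mem_range.2 (by omega))
      omega
  have hex : ∃ n, ∀ k, S k ω ≤ S n ω := ⟨n₀, hglob⟩
  refine ⟨Nat.find hex, ?_, ?_⟩
  · intro k hk
    rcases lt_or_eq_of_le (Nat.find_spec hex k) with h | h
    · exact h
    · exfalso
      have : ∀ j, S j ω ≤ S k ω := fun j => h ▸ Nat.find_spec hex j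
      exact Nat.find_min hex hk this
  · intro j
    exact Nat.find_spec hex (Nat.find hex + j)

/-- the union over `k` of `EkE` events is `LadE` -/
lemma EkE_union (n : ℕ) : (⋃ k, EkE X k n) = LadE X n := by
  ext ω
  simp only [Set.mem_iUnion, mem_EkE, mem_LadE]
  constructor
  · rintro ⟨k, hk, _⟩; exact hk
  · intro h; exact ⟨cnt (fun j => X j ω) n, h, rfl⟩

lemma EkE_k_disj (n : ℕ) : Pairwise (Function.onFun Disjoint fun k => EkE X k n) := by
  intro k k' hkk'
  rw [Function.onFun, Set.disjoint_left]
  intro ω h1 h2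
  rw [mem_EkE] at h1 h2
  exact hkk' (h1.2.symm.trans h2.2)

lemma ShE_pairwise_disj :
    Pairwise (Function.onFun Disjoint fun r => ShE X 0 (r + 1)) := by
  intro r r' hrr'
  rw [Function.onFun, Set.disjoint_left]
  intro ω h1 h2
  rw [mem_ShE] at h1 h2
  rcases Nat.lt_or_ge r r' with h | h
  · exact absurd (h2.1 (r + 1) (by omega)) (not_le.2 h1.2)
  · exact absurd (h1.1 (r' + 1) (by omega)) (not_le.2 h2.2)

/-- complement of the "never positive" event is the disjoint union of first-passage events -/
lemma GE_compl : (GE X 0)ᶜ = ⋃ r, ShE X 0 (r + 1) := by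
  classical
  ext ω
  simp only [Set.mem_compl_iff, Set.mem_iUnion, mem_ShE, shf_zero, GE, Set.mem_iInter, mem_GfE,
    not_forall]
  constructor
  · rintro ⟨M, hM⟩
    have hex : ∃ k, 0 < ps (fun j => X j ω) k := by
      by_contra hc
      push_neg at hc
      exact hM fun k _ => hc k
    have hfindpos : 0 < Nat.find hex := by
      rcases Nat.eq_zero_or_pos (Nat.find hex) with h | h
      · have := Nat.find_spec hex
        rw [h] at this
        simp [ps] at this
      · exact h
    refine ⟨Nat.find hex - 1, ?_, ?_⟩
    · intro k hk
      have : ¬ (0 < ps (fun j => X j ω) k) := Nat.find_min hex (by omega)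
      omega
    · have := Nat.find_spec hex
      rwa [show Nat.find hex - 1 + 1 = Nat.find hex by omega]
  · rintro ⟨r, hr1, hr2⟩
    exact ⟨r + 2, fun h => absurd (h (r + 1) (by omega)) (not_le.2 hr2)⟩
end Stmt18Aux

open Stmt18Aux in
theorem stmt_18 {Ω : Type*} [MeasurableSpace Ω] (μ : Measure Ω) [IsProbabilityMeasure μ]
    (X : ℕ → Ω → ℤ) (hmeas : ∀ n, Measurable (X n))
    (hindep : iIndepFun X μ)
    (hident : ∀ n, Measure.map (X n) μ = Measure.map (X 0) μ)
    (hint : Integrable (fun ω => (X 0 ω : ℝ)) μ)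
    (hdrift : ∫ ω, (X 0 ω : ℝ) ∂μ < 0)
    (S : ℕ → Ω → ℤ) (hS : ∀ n ω, S n ω = ∑ i ∈ Finset.range n, X i ω)
    -- strict ladder height measure
    (L : Measure ℤ)
    (hL : L = Measure.sum (fun n : ℕ =>
      Measure.map (fun ω => S (n + 1) ω)
        (μ.restrict {ω | (∀ k < n + 1, S k ω ≤ 0) ∧ 0 < S (n + 1) ω})))
    (p : ℝ≥0∞) (hp : p = L (Set.Ioi 0))
    -- convolution powers of L and the renewal measure ψ
    (Lpow : ℕ → Measure ℤ) (hLpow0 : Lpow 0 = Measure.dirac 0)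
    (hLpowS : ∀ n, Lpow (n + 1) = (Lpow n).conv L)
    (ψ : Measure ℤ) (hψ : ψ = Measure.sum Lpow) :
    p < 1 ∧
    ∀ A : Set ℤ, A ⊆ Set.Ici 0 →
      μ {ω | (⨆ n, S n ω) ∈ A} = (1 - p) * ψ A := by
  classical
  have hpsy : ∀ (r : ℕ) (ω : Ω), ps (fun j => X j ω) r = S r ω :=
    fun r ω => (hS r ω).symm
  have hpsf : ∀ n : ℕ, psf X n = S n := by
    intro n
    funext ω
    rw [psf, ps_congr (blk_agree0 n ω) le_rfl, hpsy]
  have hSmeas : ∀ n, Measurable (S n) := fun n => hpsf n ▸ meas_psf hmeas n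
  have hmemLad : ∀ (ω : Ω) (n : ℕ), ω ∈ LadE X n ↔ ∀ k < n, S k ω < S n ω := by
    intro ω n
    rw [mem_LadE]
    unfold LadV
    simp only [Set.mem_setOf_eq, hpsy]
  have hmemGE : ∀ (ω : Ω) (n : ℕ), ω ∈ GE X n ↔ ∀ j, S (n + j) ω ≤ S n ω := by
    intro ω n
    unfold GE
    simp only [Set.mem_iInter, mem_GfE]
    constructor
    · intro h j
      have h2 := h (j + 1) j (by omega)
      rw [ps_shf] at h2
      simp only [hpsy] at h2
      omega
    · intro h M k _
      rw [ps_shf]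
      simp only [hpsy]
      have := h k
      omega
  have hFF : ∀ r : ℕ, ShE X 0 (r + 1)
      = {ω | (∀ k < r + 1, S k ω ≤ 0) ∧ 0 < S (r + 1) ω} := by
    intro r
    ext ω
    rw [Set.mem_setOf_eq, mem_ShE, shf_zero]
    unfold ShV
    simp only [Set.mem_setOf_eq, hpsy]
  have hL' : L = Measure.sum (fun r => Measure.map (psf X (r + 1))
      (μ.restrict (ShE X 0 (r + 1)))) := by
    rw [hL]
    congr 1
    funext r
    rw [hpsf (r + 1), hFF r]
  -- Lpow identified with ladder-path measures
  set ν : ℕ → Measure ℤ := fun k => Measure.sum (fun n =>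
    Measure.map (psf X n) (μ.restrict (EkE X k n))) with hν
  have hν0 : ν 0 = Measure.dirac 0 := by
    rw [hν]
    ext A hA
    rw [Measure.sum_apply _ hA, tsum_eq_single 0 ?_]
    · have h1 : EkE X 0 0 = Set.univ := by
        unfold EkE
        rw [EkV_zero_zero, Set.preimage_univ]
      have h2 : psf X 0 = fun _ : Ω => (0 : ℤ) := by
        funext ω; exact ps_zero _
      rw [h1, Measure.restrict_univ, h2, Measure.map_const, measure_univ, one_smul]
    · intro n hn
      obtain ⟨n', rfl⟩ := Nat.exists_eq_succ_of_ne_zero hn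
      have h1 : EkE X 0 (n' + 1) = ∅ := by
        unfold EkE
        rw [EkV_zero_succ, Set.preimage_empty]
      rw [h1, Measure.restrict_empty, Measure.map_zero]
      rfl
  have hLp : ∀ k, Lpow k = ν k := by
    intro k
    induction k with
    | zero => rw [hLpow0, hν0]
    | succ k ih =>
        rw [hLpowS k, ih, hL', hν]
        exact (step hmeas hindep hident k).symm
  -- ψ applied to a set
  have hpart : ∀ (n : ℕ) (A : Set ℤ),
      (∑' k, μ (S n ⁻¹' A ∩ EkE X k n)) = μ (S n ⁻¹' A ∩ LadE X n) := by
    intro n A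
    rw [← measure_iUnion ?_ ?_]
    · congr 1
      rw [← Set.inter_iUnion, EkE_union]
    · intro k k' hkk'
      exact Disjoint.mono (Set.inter_subset_right) (Set.inter_subset_right) (EkE_k_disj n hkk')
    · intro k
      exact ((hSmeas n) MeasurableSet.of_discrete).inter (meas_EkE hmeas k n)
  have hψA : ∀ A : Set ℤ, ψ A = ∑' n, μ (S n ⁻¹' A ∩ LadE X n) := by
    intro A
    have hA : MeasurableSet A := MeasurableSet.of_discrete
    rw [hψ, Measure.sum_apply _ hA]
    have h1 : ∀ k, Lpow k A = ∑' n, μ (S n ⁻¹' A ∩ EkE X k n) := by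
      intro k
      rw [hLp k, hν, Measure.sum_apply _ hA]
      congr 1
      funext n
      rw [hpsf n, Measure.map_apply (hSmeas n) hA,
        Measure.restrict_apply ((hSmeas n) hA)]
    simp only [h1]
    rw [ENNReal.tsum_comm]
    congr 1
    funext n
    exact hpart n A
  -- the multiplication rule against GE
  have hGmul : ∀ (n : ℕ) (A : Set ℤ),
      μ (S n ⁻¹' A ∩ LadE X n ∩ GE X n)
        = μ (S n ⁻¹' A ∩ LadE X n) * μ (GE X 0) := by
    intro n A
    have hset : S n ⁻¹' A ∩ LadE X n
        = blk X 0 n ⁻¹' ({y | ps y n ∈ A} ∩ LadV n) := by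
      ext ω
      simp only [Set.mem_inter_iff, Set.mem_preimage, Set.mem_setOf_eq]
      have heq : ps (blk X 0 n ω) n = S n ω := congrFun (hpsf n) ω
      rw [heq]
      rfl
    rw [hset]
    exact G_mul hmeas hindep hident n _
      (((meas_ps n) MeasurableSet.of_discrete).inter (meas_LadV n))
  -- computation of p
  have hpcomp : p = μ ((GE X 0)ᶜ) := by
    rw [hp, hL', Measure.sum_apply _ MeasurableSet.of_discrete]
    have h1 : ∀ r : ℕ, Measure.map (psf X (r + 1)) (μ.restrict (ShE X 0 (r + 1)))
        (Set.Ioi 0) = μ (ShE X 0 (r + 1)) := by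
      intro r
      rw [Measure.map_apply (meas_psf hmeas (r + 1)) MeasurableSet.of_discrete,
        Measure.restrict_apply ((meas_psf hmeas (r + 1)) MeasurableSet.of_discrete)]
      congr 1
      apply Set.inter_eq_self_of_subset_right
      intro ω hω
      have := ((hFF r) ▸ hω : ω ∈ {ω | (∀ k < r + 1, S k ω ≤ 0) ∧ 0 < S (r + 1) ω})
      have h2 : 0 < S (r + 1) ω := this.2
      show 0 < psf X (r + 1) ω
      rw [hpsf (r + 1)]
      exact h2
    simp only [h1]
    rw [GE_compl, measure_iUnion ShE_pairwise_disj (fun r => meas_ShE hmeas 0 (r + 1))]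
  have hple : p ≤ 1 := by rw [hpcomp]; exact prob_le_one
  have hq : μ (GE X 0) = 1 - p := by
    have hp1 : p = 1 - μ (GE X 0) := by
      rw [hpcomp, measure_compl (meas_GE hmeas 0) (measure_ne_top μ _), measure_univ]
    rw [hp1, ENNReal.sub_sub_cancel ENNReal.one_ne_top prob_le_one]
  -- a.e. existence of an argmax
  have hAE : ∀ᵐ ω ∂μ, ∃ n, ω ∈ LadE X n ∩ GE X n := by
    filter_upwards [argmax_ae hmeas hindep hident hint hdrift S hS] with ω hω
    obtain ⟨n, h1, h2⟩ := hω
    exact ⟨n, (hmemLad ω n).2 h1, (hmemGE ω n).2 h2⟩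
  have hsup : ∀ (ω : Ω) (n : ℕ), ω ∈ LadE X n ∩ GE X n → (⨆ j, S j ω) = S n ω := by
    rintro ω n ⟨h1, h2⟩
    rw [hmemLad] at h1
    rw [hmemGE] at h2
    have hb : ∀ j, S j ω ≤ S n ω := by
      intro j
      rcases Nat.lt_or_ge j n with h | h
      · exact le_of_lt (h1 j h)
      · have := h2 (j - n)
        rwa [show n + (j - n) = j by omega] at this
    exact le_antisymm (ciSup_le hb) (le_ciSup ⟨S n ω, Set.forall_mem_range.2 hb⟩ n)
  have hdisj : Pairwise (Function.onFun Disjoint (fun n => LadE X n ∩ GE X n)) := by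
    intro n n' hne
    rw [Function.onFun, Set.disjoint_left]
    rintro ω ⟨hl, hg⟩ ⟨hl', hg'⟩
    rw [hmemLad ω n] at hl
    rw [hmemLad ω n'] at hl'
    rw [hmemGE ω n] at hg
    rw [hmemGE ω n'] at hg'
    rcases Nat.lt_or_ge n n' with h | h
    · have h1 : S n ω < S n' ω := hl' n h
      have h2 : S n' ω ≤ S n ω := by
        have := hg (n' - n); rwa [show n + (n' - n) = n' by omega] at this
      omega
    · have hlt : n' < n := by omega
      have h1 : S n' ω < S n ω := hl n' hlt
      have h2 : S n ω ≤ S n' ω := by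
        have := hg' (n - n'); rwa [show n' + (n - n') = n by omega] at this
      omega
  -- main identity
  have hmain : ∀ A : Set ℤ, μ {ω | (⨆ n, S n ω) ∈ A} = (1 - p) * ψ A := by
    intro A
    have hU : μ {ω | (⨆ n, S n ω) ∈ A}
        = μ (⋃ n, (S n ⁻¹' A ∩ LadE X n ∩ GE X n)) := by
      apply measure_congr
      filter_upwards [hAE] with ω hω
      obtain ⟨n, hn⟩ := hω
      have hsupn := hsup ω n hn
      show ((⨆ j, S j ω) ∈ A) = (ω ∈ ⋃ n, (S n ⁻¹' A ∩ LadE X n ∩ GE X n))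
      rw [eq_iff_iff]
      constructor
      · intro hA
        refine Set.mem_iUnion.2 ⟨n, ⟨⟨?_, hn.1⟩, hn.2⟩⟩
        rwa [hsupn] at hA
      · intro hA
        obtain ⟨m, ⟨hmA, hml⟩, hmg⟩ := Set.mem_iUnion.1 hA
        rwa [hsup ω m ⟨hml, hmg⟩]
    rw [hU, measure_iUnion ?_ ?_]
    · have hterm : ∀ n, μ (S n ⁻¹' A ∩ LadE X n ∩ GE X n)
          = μ (S n ⁻¹' A ∩ LadE X n) * μ (GE X 0) := fun n => hGmul n A
      simp only [hterm]
      rw [ENNReal.tsum_mul_right, hq, ← hψA A]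
      exact mul_comm _ _
    · intro n n' hne
      exact Disjoint.mono
        (Set.inter_subset_inter_left _ Set.inter_subset_right)
        (Set.inter_subset_inter_left _ Set.inter_subset_right) (hdisj hne)
    · intro n
      exact (((hSmeas n) MeasurableSet.of_discrete).inter (meas_LadE hmeas n)).inter
        (meas_GE hmeas n)
  constructor
  · have h1 : μ Set.univ = (1 - p) * ψ Set.univ := by
      have := hmain Set.univ
      simpa using this
    by_contra hc
    push_neg at hc
    have hp1 : p = 1 := le_antisymm hple hc
    rw [hp1, measure_univ] at h1
    simp at h1
  · intro A _
    exact hmain A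
end
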